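/- arXiv:2411.10975 — 4 statements merged into one kernel-verified Lean document; each statement's English description precedes it below -/
import Mathlib

section
/- For any real s < 0, the estimate ‖∫₀¹ e^{i(1-t')∂ₓₓ}(|e^{it'∂ₓₓ}u₀|² e^{it'∂ₓₓ}u₀) dt'‖_{H^s} ≲ ‖u₀‖_{H^s}³ fails; more precisely, taking û₀ = χ_{[N,N+c]} for large N and small fixed c > 0, the left side is ≳ N^s while the right side is ∼ N^{3s}, so no uniform constant exists as N → ∞. -/
open MeasureTheory Complex Set
open scoped ENNReal

noncomputable section

/-- Japanese bracket `⟨x⟩ = (1+x²)^{1/2}`. -/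
def jap (x : ℝ) : ℝ := Real.sqrt (1 + x ^ 2)

/-- Fourier-side second Picard iterate (at time 1) of the cubic Schrödinger
nonlinearity, applied to data with Fourier transform `f`, evaluated at frequency `ξ`. -/
def cubicIter (f : ℝ → ℂ) (ξ : ℝ) : ℂ :=
  ∫ t' in (0:ℝ)..1, ∫ ξ₁ : ℝ, ∫ ξ₂ : ℝ,
    Complex.exp (Complex.I * ((2 * t' * (ξ₁ - ξ₂) * (ξ - ξ₁) : ℝ) : ℂ)) *
      f ξ₁ * (starRingEnd ℂ) (f ξ₂) * f (ξ - ξ₁ + ξ₂)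

namespace CF

def fN (N : ℝ) : ℝ → ℂ := (Set.Icc N (N+1/2)).indicator 1

lemma fN_mem {N x : ℝ} (h : x ∈ Set.Icc N (N+1/2)) : fN N x = 1 :=
  Set.indicator_of_mem h 1

lemma fN_nmem {N x : ℝ} (h : x ∉ Set.Icc N (N+1/2)) : fN N x = 0 :=
  Set.indicator_of_notMem h 1

lemma norm_fN_le (N x : ℝ) : ‖fN N x‖ ≤ 1 := by
  by_cases h : x ∈ Set.Icc N (N+1/2)
  · rw [fN_mem h]; simp
  · rw [fN_nmem h]; simp

lemma measurable_fN (N : ℝ) : Measurable (fN N) :=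
  (measurable_const.indicator measurableSet_Icc)

def G (N ξ t' ξ₁ ξ₂ : ℝ) : ℂ :=
  Complex.exp (Complex.I * ((2 * t' * (ξ₁ - ξ₂) * (ξ - ξ₁) : ℝ) : ℂ)) *
    fN N ξ₁ * (starRingEnd ℂ) (fN N ξ₂) * fN N (ξ - ξ₁ + ξ₂)

lemma measurable_G (N ξ : ℝ) :
    Measurable (fun p : ℝ × ℝ × ℝ => G N ξ p.1 p.2.1 p.2.2) := by
  unfold G
  apply Measurable.mul
  apply Measurable.mul
  apply Measurable.mul
  · exact Complex.measurable_exp.comp <| measurable_const.mul <|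
      Complex.measurable_ofReal.comp <| by fun_prop
  · exact (measurable_fN N).comp (by fun_prop)
  · exact (Complex.continuous_conj.measurable).comp <| (measurable_fN N).comp (by fun_prop)
  · exact (measurable_fN N).comp (by fun_prop)


lemma indI_integrable (N c : ℝ) :
    Integrable ((Set.Icc N (N+1/2)).indicator (fun _ => c)) volume := by
  rw [integrable_indicator_iff measurableSet_Icc]
  exact integrableOn_const (by simp [Real.volume_Icc])

lemma norm_G_le (N ξ t' ξ₁ ξ₂ : ℝ) :
    ‖G N ξ t' ξ₁ ξ₂‖ ≤ (Set.Icc N (N+1/2)).indicator (fun _ => (1:ℝ)) ξ₂ := by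
  by_cases h : ξ₂ ∈ Set.Icc N (N+1/2)
  · rw [Set.indicator_of_mem h]
    unfold G
    have h1 : ‖Complex.exp (Complex.I * ((2 * t' * (ξ₁ - ξ₂) * (ξ - ξ₁) : ℝ) : ℂ))‖ = 1 := by
      rw [mul_comm]
      exact Complex.norm_exp_ofReal_mul_I _
    rw [norm_mul, norm_mul, norm_mul, h1, one_mul, RCLike.norm_conj]
    exact mul_le_one₀ (mul_le_one₀ (norm_fN_le _ _) (norm_nonneg _) (norm_fN_le _ _))
      (norm_nonneg _) (norm_fN_le _ _)
  · rw [Set.indicator_of_notMem h]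
    unfold G
    rw [fN_nmem h]
    simp only [map_zero, mul_zero, zero_mul, norm_zero]
    exact le_refl 0

lemma hInt2 (N ξ t' ξ₁ : ℝ) : Integrable (fun ξ₂ => G N ξ t' ξ₁ ξ₂) volume := by
  refine Integrable.mono' (indI_integrable N 1) ?_ ?_
  · exact ((measurable_G N ξ).comp (by fun_prop : Measurable fun ξ₂ : ℝ => (t', ξ₁, ξ₂))).aestronglyMeasurable
  · exact Filter.Eventually.of_forall (norm_G_le N ξ t' ξ₁)

lemma norm_inner2_le (N ξ t' ξ₁ : ℝ) :
    ‖∫ ξ₂ : ℝ, G N ξ t' ξ₁ ξ₂‖ ≤ (Set.Icc N (N+1/2)).indicator (fun _ => (1/2:ℝ)) ξ₁ := by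
  by_cases h : ξ₁ ∈ Set.Icc N (N+1/2)
  · rw [Set.indicator_of_mem h]
    calc ‖∫ ξ₂ : ℝ, G N ξ t' ξ₁ ξ₂‖ ≤ ∫ ξ₂ : ℝ, ‖G N ξ t' ξ₁ ξ₂‖ := norm_integral_le_integral_norm _
      _ ≤ ∫ ξ₂ : ℝ, (Set.Icc N (N+1/2)).indicator (fun _ => (1:ℝ)) ξ₂ :=
          integral_mono (hInt2 N ξ t' ξ₁).norm (indI_integrable N 1)
            (norm_G_le N ξ t' ξ₁)
      _ = 1/2 := by
          rw [integral_indicator measurableSet_Icc]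
          simp [Real.volume_Icc]
  · rw [Set.indicator_of_notMem h]
    have : ∀ ξ₂ : ℝ, G N ξ t' ξ₁ ξ₂ = 0 := by
      intro ξ₂; unfold G; rw [fN_nmem h]; ring
    simp [this]

lemma sm_inner2 (N ξ t' : ℝ) :
    StronglyMeasurable (fun ξ₁ : ℝ => ∫ ξ₂ : ℝ, G N ξ t' ξ₁ ξ₂) := by
  have : StronglyMeasurable (fun p : ℝ × ℝ => G N ξ t' p.1 p.2) :=
    ((measurable_G N ξ).comp (by fun_prop : Measurable fun p : ℝ × ℝ => (t', p.1, p.2))).stronglyMeasurable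
  exact this.integral_prod_right'

lemma hInt1 (N ξ t' : ℝ) : Integrable (fun ξ₁ => ∫ ξ₂ : ℝ, G N ξ t' ξ₁ ξ₂) volume := by
  refine Integrable.mono' (indI_integrable N (1/2)) (sm_inner2 N ξ t').aestronglyMeasurable ?_
  exact Filter.Eventually.of_forall (norm_inner2_le N ξ t')

lemma sm_inner1 (N ξ : ℝ) :
    StronglyMeasurable (fun t' : ℝ => ∫ ξ₁ : ℝ, ∫ ξ₂ : ℝ, G N ξ t' ξ₁ ξ₂) := by
  have h2 : StronglyMeasurable (fun p : ℝ × ℝ => ∫ ξ₂ : ℝ, G N ξ p.1 p.2 ξ₂) := by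
    have : StronglyMeasurable (fun q : (ℝ × ℝ) × ℝ => G N ξ q.1.1 q.1.2 q.2) :=
      ((measurable_G N ξ).comp (by fun_prop : Measurable fun q : (ℝ × ℝ) × ℝ =>
        (q.1.1, q.1.2, q.2))).stronglyMeasurable
    exact this.integral_prod_right'
  exact h2.integral_prod_right'

lemma hIntT (N ξ : ℝ) :
    IntervalIntegrable (fun t' : ℝ => ∫ ξ₁ : ℝ, ∫ ξ₂ : ℝ, G N ξ t' ξ₁ ξ₂) volume 0 1 := by
  apply IntegrableOn.intervalIntegrable
  refine Integrable.mono' (g := fun _ => (1/4:ℝ)) (integrableOn_const (by simp)) 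
    (sm_inner1 N ξ).aestronglyMeasurable.restrict ?_
  refine Filter.Eventually.of_forall (fun t' => ?_)
  calc ‖∫ ξ₁ : ℝ, ∫ ξ₂ : ℝ, G N ξ t' ξ₁ ξ₂‖ ≤ ∫ ξ₁ : ℝ, ‖∫ ξ₂ : ℝ, G N ξ t' ξ₁ ξ₂‖ :=
        norm_integral_le_integral_norm _
    _ ≤ ∫ ξ₁ : ℝ, (Set.Icc N (N+1/2)).indicator (fun _ => (1/2:ℝ)) ξ₁ :=
        integral_mono (hInt1 N ξ t').norm (indI_integrable N (1/2)) (norm_inner2_le N ξ t')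
    _ ≤ 1/4 := by
        rw [integral_indicator measurableSet_Icc]
        simp [Real.volume_Icc]
        norm_num


lemma reG_ge {N ξ t' ξ₁ ξ₂ : ℝ} (hξ : ξ ∈ Set.Icc N (N+1/2)) (ht : t' ∈ Set.Icc (0:ℝ) 1)
    (h1 : ξ₁ ∈ Set.Icc N (N+1/2)) (h2 : ξ₂ ∈ Set.Icc N (N+1/2))
    (h3 : ξ - ξ₁ + ξ₂ ∈ Set.Icc N (N+1/2)) :
    7/8 ≤ (G N ξ t' ξ₁ ξ₂).re := by
  have hG : G N ξ t' ξ₁ ξ₂ = Complex.exp (((2 * t' * (ξ₁ - ξ₂) * (ξ - ξ₁) : ℝ) : ℂ) * Complex.I) := by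
    unfold G
    rw [fN_mem h1, fN_mem h2, fN_mem h3, mul_comm Complex.I]
    simp
  rw [hG, Complex.exp_ofReal_mul_I_re]
  set θ := 2 * t' * (ξ₁ - ξ₂) * (ξ - ξ₁) with hθ
  have hθ2 : θ^2 ≤ 1/4 := by
    obtain ⟨h1a, h1b⟩ := h1; obtain ⟨h2a, h2b⟩ := h2
    obtain ⟨hξa, hξb⟩ := hξ; obtain ⟨hta, htb⟩ := ht
    have habs : |θ| ≤ 1/2 := by
      have e1 : |ξ₁ - ξ₂| ≤ 1/2 := abs_le.2 ⟨by linarith, by linarith⟩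
      have e2 : |ξ - ξ₁| ≤ 1/2 := abs_le.2 ⟨by linarith, by linarith⟩
      have e3 : |t'| ≤ 1 := abs_le.2 ⟨by linarith, htb⟩
      calc |θ| = 2 * |t'| * |ξ₁ - ξ₂| * |ξ - ξ₁| := by
            rw [hθ, abs_mul, abs_mul, abs_mul]; norm_num
        _ ≤ 2 * 1 * (1/2) * (1/2) := by gcongr 
        _ = 1/2 := by norm_num
    nlinarith [abs_nonneg θ, _root_.sq_abs θ]
  have := Real.one_sub_sq_div_two_le_cos (x := θ)
  linarith

lemma reG_nonneg {N ξ t' ξ₁ : ℝ} (ξ₂ : ℝ) (hξ : ξ ∈ Set.Icc N (N+1/2))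
    (ht : t' ∈ Set.Icc (0:ℝ) 1) : 0 ≤ (G N ξ t' ξ₁ ξ₂).re := by
  by_cases h1 : ξ₁ ∈ Set.Icc N (N+1/2)
  · by_cases h2 : ξ₂ ∈ Set.Icc N (N+1/2)
    · by_cases h3 : ξ - ξ₁ + ξ₂ ∈ Set.Icc N (N+1/2)
      · linarith [reG_ge hξ ht h1 h2 h3]
      · unfold G; rw [fN_nmem h3]; simp
    · unfold G; rw [fN_nmem h2]; simp
  · unfold G; rw [fN_nmem h1]; simp



lemma indIcc_integrable (a b c : ℝ) :
    Integrable ((Set.Icc a b).indicator (fun _ => c)) volume := by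
  rw [integrable_indicator_iff measurableSet_Icc]
  exact integrableOn_const (by simp [Real.volume_Icc])

lemma re_inner2_ge {N ξ t' ξ₁ : ℝ} (hξ : ξ ∈ Set.Icc N (N+1/2)) (ht : t' ∈ Set.Icc (0:ℝ) 1)
    (h1 : ξ₁ ∈ Set.Icc (N + (ξ-N)/2) (N + (ξ-N)/2 + 1/4)) :
    7/32 ≤ (∫ ξ₂ : ℝ, G N ξ t' ξ₁ ξ₂).re := by
  obtain ⟨hξa, hξb⟩ := hξ
  obtain ⟨ha, hb⟩ := h1
  set m := max 0 (ξ₁ - ξ) with hmdef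
  have hm0 : 0 ≤ m := le_max_left _ _
  have hmba : ξ₁ - ξ ≤ m := le_max_right _ _
  have hm14 : m ≤ 1/4 := max_le (by norm_num) (by linarith)
  have h1I : ξ₁ ∈ Set.Icc N (N+1/2) := ⟨by linarith, by linarith⟩
  have hre := integral_re (hInt2 N ξ t' ξ₁)
  simp only [RCLike.re_to_complex] at hre
  rw [← hre]
  have key : ∀ ξ₂ : ℝ, (Set.Icc (N + m) (N + m + 1/4)).indicator (fun _ => (7/8:ℝ)) ξ₂ ≤
      (G N ξ t' ξ₁ ξ₂).re := by
    intro ξ₂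
    by_cases h : ξ₂ ∈ Set.Icc (N + m) (N + m + 1/4)
    · rw [Set.indicator_of_mem h]
      obtain ⟨hda, hdb⟩ := h
      have h2 : ξ₂ ∈ Set.Icc N (N+1/2) := ⟨by linarith, by linarith⟩
      have h3 : ξ - ξ₁ + ξ₂ ∈ Set.Icc N (N+1/2) := by
        constructor
        · linarith
        · rcases le_total (ξ₁ - ξ) 0 with hc | hc
          · have hmz : m = 0 := max_eq_left hc
            linarith
          · have hmz : m = ξ₁ - ξ := max_eq_right hc
            linarith
      exact reG_ge ⟨hξa, hξb⟩ ht h1I h2 h3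
    · rw [Set.indicator_of_notMem h]
      exact reG_nonneg ξ₂ ⟨hξa, hξb⟩ ht
  have hmono := integral_mono (μ := volume) (indIcc_integrable (N+m) (N+m+1/4) (7/8))
    (hInt2 N ξ t' ξ₁).re key
  simp only [RCLike.re_to_complex] at hmono
  have hval : ∫ ξ₂ : ℝ, (Set.Icc (N + m) (N + m + 1/4)).indicator (fun _ => (7/8:ℝ)) ξ₂
      = 7/32 := by
    rw [integral_indicator measurableSet_Icc]
    simp [Real.volume_Icc]
    norm_num
  linarith [hmono, hval.ge, hval.le]

lemma re_inner1_ge {N ξ t' : ℝ} (hξ : ξ ∈ Set.Icc N (N+1/2)) (ht : t' ∈ Set.Icc (0:ℝ) 1) :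
    7/128 ≤ (∫ ξ₁ : ℝ, ∫ ξ₂ : ℝ, G N ξ t' ξ₁ ξ₂).re := by
  have hre := integral_re (hInt1 N ξ t')
  simp only [RCLike.re_to_complex] at hre
  rw [← hre]
  have key : ∀ ξ₁ : ℝ, (Set.Icc (N + (ξ-N)/2) (N + (ξ-N)/2 + 1/4)).indicator
      (fun _ => (7/32:ℝ)) ξ₁ ≤ (∫ ξ₂ : ℝ, G N ξ t' ξ₁ ξ₂).re := by
    intro ξ₁
    by_cases h : ξ₁ ∈ Set.Icc (N + (ξ-N)/2) (N + (ξ-N)/2 + 1/4)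
    · rw [Set.indicator_of_mem h]
      exact re_inner2_ge hξ ht h
    · rw [Set.indicator_of_notMem h]
      have hre2 := integral_re (hInt2 N ξ t' ξ₁)
      simp only [RCLike.re_to_complex] at hre2
      rw [← hre2]
      exact integral_nonneg (fun ξ₂ => reG_nonneg ξ₂ hξ ht)
  have hmono := integral_mono (μ := volume)
    (indIcc_integrable (N + (ξ-N)/2) (N + (ξ-N)/2 + 1/4) (7/32)) (hInt1 N ξ t').re key
  simp only [RCLike.re_to_complex] at hmono
  have hval : ∫ ξ₁ : ℝ, (Set.Icc (N + (ξ-N)/2) (N + (ξ-N)/2 + 1/4)).indicator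
      (fun _ => (7/32:ℝ)) ξ₁ = 7/128 := by
    rw [integral_indicator measurableSet_Icc]
    simp [Real.volume_Icc]
    norm_num
  linarith [hmono, hval.le]

lemma re_cubic_ge {N ξ : ℝ} (hξ : ξ ∈ Set.Icc N (N+1/2)) :
    7/128 ≤ (cubicIter (fN N) ξ).re := by
  have hc : cubicIter (fN N) ξ = ∫ t' in (0:ℝ)..1, ∫ ξ₁ : ℝ, ∫ ξ₂ : ℝ, G N ξ t' ξ₁ ξ₂ := rfl
  rw [hc, intervalIntegral.integral_of_le zero_le_one]
  have hre := integral_re (hIntT N ξ).1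
  simp only [RCLike.re_to_complex] at hre
  rw [← hre]
  have hconst : ∫ _ : ℝ in Set.Ioc (0:ℝ) 1, (7/128 : ℝ) = 7/128 := by
    simp [Real.volume_Ioc]
  calc (7:ℝ)/128 = ∫ _ : ℝ in Set.Ioc (0:ℝ) 1, (7/128 : ℝ) := hconst.symm
    _ ≤ ∫ t' in Set.Ioc (0:ℝ) 1, (∫ ξ₁ : ℝ, ∫ ξ₂ : ℝ, G N ξ t' ξ₁ ξ₂).re := by
        refine setIntegral_mono_on (integrableOn_const (by simp [Real.volume_Ioc]))
          ((hIntT N ξ).1.re) measurableSet_Ioc (fun t' ht' => ?_)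
        exact re_inner1_ge hξ ⟨le_of_lt ht'.1, ht'.2⟩

lemma norm_cubic_ge {N ξ : ℝ} (hξ : ξ ∈ Set.Icc N (N+1/2)) :
    (1:ℝ)/32 ≤ ‖cubicIter (fN N) ξ‖ := by
  have h := re_cubic_ge hξ
  have := Complex.abs_re_le_norm (cubicIter (fN N) ξ)
  have : (cubicIter (fN N) ξ).re ≤ ‖cubicIter (fN N) ξ‖ := by
    calc (cubicIter (fN N) ξ).re ≤ |(cubicIter (fN N) ξ).re| := le_abs_self _
      _ ≤ ‖cubicIter (fN N) ξ‖ := Complex.abs_re_le_norm _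
  linarith

lemma jap_pos (x : ℝ) : 0 < jap x :=
  Real.sqrt_pos.2 (by nlinarith [sq_nonneg x])

lemma jap_mono {x y : ℝ} (hx : 0 ≤ x) (hxy : x ≤ y) : jap x ≤ jap y := by
  unfold jap
  exact Real.sqrt_le_sqrt (by nlinarith)

lemma jap_le {x : ℝ} (hx : 0 ≤ x) : jap x ≤ x + 1 := by
  unfold jap
  calc Real.sqrt (1 + x ^ 2) ≤ Real.sqrt ((x+1)^2) := Real.sqrt_le_sqrt (by nlinarith)
    _ = x + 1 := Real.sqrt_sq (by linarith)

lemma self_le_jap {x : ℝ} (hx : 0 ≤ x) : x ≤ jap x := by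
  unfold jap
  calc x = Real.sqrt (x^2) := (Real.sqrt_sq hx).symm
    _ ≤ Real.sqrt (1 + x^2) := Real.sqrt_le_sqrt (by nlinarith)

lemma eLpNorm_indicator_eval (N c : ℝ) (hc : 0 ≤ c) :
    eLpNorm ((Set.Icc N (N+1/2)).indicator (fun _ => c)) 2 volume
      = ENNReal.ofReal (c * (1/2 : ℝ) ^ ((1:ℝ)/2)) := by
  rw [eLpNorm_indicator_const measurableSet_Icc (by norm_num) (by norm_num)]
  have h1 : ‖c‖ₑ = ENNReal.ofReal c := by
    rw [Real.enorm_eq_ofReal hc]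
  have h2 : volume (Set.Icc N (N+1/2)) = ENNReal.ofReal (1/2) := by
    rw [Real.volume_Icc]; norm_num
  rw [h1, h2]
  have h3 : (1 / (2:ℝ≥0∞).toReal) = (1:ℝ)/2 := by norm_num
  rw [h3, ENNReal.ofReal_mul hc, ENNReal.ofReal_rpow_of_pos (by norm_num : (0:ℝ) < 1/2)]

lemma lhs_lower {N : ℝ} (hN : 0 ≤ N) (s : ℝ) (hs : s < 0) :
    ENNReal.ofReal ((jap (N+1) ^ s * (1/32)) * (1/2 : ℝ) ^ ((1:ℝ)/2)) ≤
      eLpNorm (fun ξ : ℝ => jap ξ ^ s * ‖cubicIter (fN N) ξ‖) 2 volume := by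
  set c₀ : ℝ := jap (N+1) ^ s * (1/32) with hc₀
  have hc₀pos : 0 < c₀ := by
    apply mul_pos (Real.rpow_pos_of_pos (jap_pos _) _) (by norm_num)
  rw [← eLpNorm_indicator_eval N c₀ hc₀pos.le]
  apply eLpNorm_mono
  intro x
  by_cases h : x ∈ Set.Icc N (N+1/2)
  · rw [Set.indicator_of_mem h, Real.norm_eq_abs, Real.norm_eq_abs, _root_.abs_of_nonneg hc₀pos.le]
    have hx0 : 0 ≤ x := le_trans hN h.1
    have hjap : jap x ≤ jap (N+1) := jap_mono hx0 (by linarith [h.2])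
    have hr : jap (N+1) ^ s ≤ jap x ^ s :=
      Real.rpow_le_rpow_of_nonpos (jap_pos x) hjap hs.le
    have hcub : (1:ℝ)/32 ≤ ‖cubicIter (fN N) x‖ := norm_cubic_ge h
    have : c₀ ≤ jap x ^ s * ‖cubicIter (fN N) x‖ := by
      rw [hc₀]
      exact mul_le_mul hr hcub (by norm_num) (Real.rpow_nonneg (jap_pos x).le _)
    calc c₀ ≤ jap x ^ s * ‖cubicIter (fN N) x‖ := this
      _ ≤ |jap x ^ s * ‖cubicIter (fN N) x‖| := le_abs_self _
  · rw [Set.indicator_of_notMem h]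
    simp only [norm_zero, Real.norm_eq_abs]
    positivity

lemma rhs_upper {N : ℝ} (hN : 0 ≤ N) (s : ℝ) (hs : s < 0) :
    eLpNorm (fun ξ : ℝ => jap ξ ^ s * ‖fN N ξ‖) 2 volume ≤
      ENNReal.ofReal ((jap N ^ s) * (1/2 : ℝ) ^ ((1:ℝ)/2)) := by
  have hβ : 0 ≤ jap N ^ s := Real.rpow_nonneg (jap_pos N).le _
  rw [← eLpNorm_indicator_eval N _ hβ]
  apply eLpNorm_mono
  intro x
  by_cases h : x ∈ Set.Icc N (N+1/2)
  · rw [Set.indicator_of_mem h, fN_mem h]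
    simp only [norm_one, mul_one, Real.norm_eq_abs]
    rw [_root_.abs_of_nonneg (Real.rpow_nonneg (jap_pos x).le _), _root_.abs_of_nonneg hβ]
    exact Real.rpow_le_rpow_of_nonpos (jap_pos N) (jap_mono hN h.1) hs.le
  · rw [Set.indicator_of_notMem h, fN_nmem h]
    simp
end CF

/-- For `s < 0`, the trilinear estimate
`‖∫₀¹ S(1-t')(|S(t')u₀|² S(t')u₀) dt'‖_{H^s} ≲ ‖u₀‖_{H^s}³` fails:
no uniform constant `C` exists (Fourier-side formulation, quantifying over Fourier data `f`). -/
theorem cubic_iterate_estimate_fails (s : ℝ) (hs : s < 0) :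
    ¬ ∃ C : ℝ, 0 < C ∧ ∀ f : ℝ → ℂ,
      eLpNorm (fun ξ : ℝ => jap ξ ^ s * ‖cubicIter f ξ‖) 2 volume ≤
        ENNReal.ofReal C *
          (eLpNorm (fun ξ : ℝ => jap ξ ^ s * ‖f ξ‖) 2 volume) ^ 3 := by

  rintro ⟨C, hC, hest⟩
  classical
  set δ : ℝ := Real.sqrt (3 ^ s / (32 * C)) with hδ
  have h3s : (0:ℝ) < 3 ^ s := Real.rpow_pos_of_pos (by norm_num) _
  have hδpos : 0 < δ := Real.sqrt_pos.2 (by positivity)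
  set N : ℝ := max 2 (δ ^ s⁻¹) with hNdef
  have hN2 : (2:ℝ) ≤ N := le_max_left _ _
  have hNpos : (0:ℝ) < N := by linarith
  have hN0 : (0:ℝ) ≤ N := hNpos.le
  -- key: N ^ s ≤ δ
  have hNs : N ^ s ≤ δ := by
    have h1 : δ ^ s⁻¹ ≤ N := le_max_right _ _
    have h2 : (0:ℝ) < δ ^ s⁻¹ := Real.rpow_pos_of_pos hδpos _
    calc N ^ s ≤ (δ ^ s⁻¹) ^ s := Real.rpow_le_rpow_of_nonpos h2 h1 hs.le
      _ = δ := Real.rpow_inv_rpow hδpos.le (ne_of_lt hs)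
  have hu : 0 < N ^ s := Real.rpow_pos_of_pos hNpos _
  -- apply the estimate to fN N
  have key := hest (CF.fN N)
  have hA := CF.lhs_lower hN0 s hs
  have hB := CF.rhs_upper hN0 s hs
  set r : ℝ := (1/2 : ℝ) ^ ((1:ℝ)/2) with hr
  have hrpos : 0 < r := Real.rpow_pos_of_pos (by norm_num) _
  have hr2 : r ^ 2 = 1/2 := by
    rw [hr, ← Real.rpow_natCast ((1/2:ℝ) ^ ((1:ℝ)/2)) 2, ← Real.rpow_mul (by norm_num)]
    norm_num
  have hβ : 0 ≤ jap N ^ s := Real.rpow_nonneg (CF.jap_pos N).le _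
  have chain : ENNReal.ofReal ((jap (N+1) ^ s * (1/32)) * r) ≤
      ENNReal.ofReal (C * ((jap N ^ s) * r) ^ 3) := by
    calc ENNReal.ofReal ((jap (N+1) ^ s * (1/32)) * r) ≤
        eLpNorm (fun ξ : ℝ => jap ξ ^ s * ‖cubicIter (CF.fN N) ξ‖) 2 volume := hA
      _ ≤ ENNReal.ofReal C *
          (eLpNorm (fun ξ : ℝ => jap ξ ^ s * ‖CF.fN N ξ‖) 2 volume) ^ 3 := key
      _ ≤ ENNReal.ofReal C * (ENNReal.ofReal ((jap N ^ s) * r)) ^ 3 := by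
          gcongr
      _ = ENNReal.ofReal (C * ((jap N ^ s) * r) ^ 3) := by
          rw [← ENNReal.ofReal_pow (by positivity), ← ENNReal.ofReal_mul hC.le]
  have hreal : (jap (N+1) ^ s * (1/32)) * r ≤ C * ((jap N ^ s) * r) ^ 3 :=
    (ENNReal.ofReal_le_ofReal_iff (by positivity)).1 chain
  -- simplify
  have hj1 : (3*N) ^ s ≤ jap (N+1) ^ s := by
    apply Real.rpow_le_rpow_of_nonpos (CF.jap_pos _) _ hs.le
    calc jap (N+1) ≤ (N+1) + 1 := CF.jap_le (by linarith)
      _ ≤ 3*N := by linarith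
  have hj2 : jap N ^ s ≤ N ^ s :=
    Real.rpow_le_rpow_of_nonpos hNpos (CF.self_le_jap hN0) hs.le
  have h3N : (3*N) ^ s = 3 ^ s * N ^ s := Real.mul_rpow (by norm_num) hN0
  -- combine
  have step1 : (3 ^ s * N ^ s * (1/32)) * r ≤ C * ((N ^ s) * r) ^ 3 := by
    calc (3 ^ s * N ^ s * (1/32)) * r = ((3*N) ^ s * (1/32)) * r := by rw [h3N]
      _ ≤ (jap (N+1) ^ s * (1/32)) * r := by
          apply mul_le_mul_of_nonneg_right _ hrpos.le
          apply mul_le_mul_of_nonneg_right hj1 (by norm_num)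
      _ ≤ C * ((jap N ^ s) * r) ^ 3 := hreal
      _ ≤ C * ((N ^ s) * r) ^ 3 := by
          apply mul_le_mul_of_nonneg_left _ hC.le
          apply pow_le_pow_left₀ (by positivity)
          exact mul_le_mul_of_nonneg_right hj2 hrpos.le
  -- with u := N^s : 3^s * u * (1/32) * r ≤ C * u^3 * r^3 = C u^3 r^2 * r
  have hδ2 : δ ^ 2 = 3 ^ s / (32 * C) := Real.sq_sqrt (by positivity)
  have husq : (N ^ s) ^ 2 ≤ 3 ^ s / (32 * C) := by
    rw [← hδ2]
    exact pow_le_pow_left₀ hu.le hNs 2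
  set u : ℝ := N ^ s with hudef
  have hr3 : r ^ 3 = (1/2) * r := by
    rw [pow_succ, hr2]
  have hrhs : C * (u * r) ^ 3 = (C * u^3 * (1/2)) * r := by
    calc C * (u * r) ^ 3 = C * u^3 * r^3 := by ring
      _ = C * u^3 * ((1/2) * r) := by rw [hr3]
      _ = (C * u^3 * (1/2)) * r := by ring
  have hquot : 3 ^ s * u * (1/32) ≤ C * u^3 * (1/2) := by
    apply le_of_mul_le_mul_right _ hrpos
    calc 3 ^ s * u * (1/32) * r ≤ C * (u * r) ^ 3 := step1
      _ = (C * u^3 * (1/2)) * r := hrhs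
  have h6 : C * u^3 ≤ 3 ^ s * u / 32 := by
    have hmul : u^2 * u ≤ (3 ^ s / (32 * C)) * u :=
      mul_le_mul_of_nonneg_right husq hu.le
    calc C * u^3 = C * (u^2 * u) := by ring
      _ ≤ C * ((3 ^ s / (32 * C)) * u) := mul_le_mul_of_nonneg_left hmul hC.le
      _ = 3 ^ s * u / 32 := by field_simp
  nlinarith [mul_pos h3s hu]
end
end

section
/- Let f = χ_{[1,2]}, g = χ_{[N,N+4]} with N ≫ 1. Then for every ξ ∈ [N+2, N+3], the quantity |⟨ξ⟩^{s₁} ∫_ℝ (1 - e^{i(ξ²-ξ₁²+(ξ-ξ₁)³)})/(ξ²-ξ₁²+(ξ-ξ₁)³) · f(ξ₁) g(ξ-ξ₁) / (⟨ξ₁⟩^{s₁} ⟨ξ-ξ₁⟩^{s₂}) dξ₁| is comparable to N^{s₁-s₂-3}. Consequently, the boundedness of this bilinear operator from L²×L² to L² forces s₂ ≥ s₁ - 3. -/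
open MeasureTheory Complex Set
open scoped ENNReal

noncomputable section

lemma jap_ge_one (x : ℝ) : 1 ≤ jap x :=
  Real.one_le_sqrt.mpr (by nlinarith [sq_nonneg x])

lemma jap_pos (x : ℝ) : 0 < jap x := lt_of_lt_of_le one_pos (jap_ge_one x)

lemma jap_ge_self {x : ℝ} (hx : 0 ≤ x) : x ≤ jap x :=
  (Real.le_sqrt hx (by positivity)).mpr (by nlinarith)

lemma jap_le {x M : ℝ} (h : 1 + x^2 ≤ M^2) (hM : 0 ≤ M) : jap x ≤ M := by
  rw [jap]
  calc Real.sqrt (1 + x^2) ≤ Real.sqrt (M^2) := Real.sqrt_le_sqrt h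
  _ = M := Real.sqrt_sq hM

lemma rpow_upper {a M s : ℝ} (ha : 1 ≤ a) (haM : a ≤ M) : a ^ s ≤ M ^ |s| :=
  (Real.rpow_le_rpow_of_exponent_le ha (le_abs_self s)).trans
    (Real.rpow_le_rpow (by linarith) haM (abs_nonneg s))

lemma rpow_lower {a M s : ℝ} (ha : 1 ≤ a) (haM : a ≤ M) : M ^ (-|s|) ≤ a ^ s :=
  (Real.rpow_le_rpow_of_nonpos (by linarith) haM (neg_nonpos.mpr (abs_nonneg s))).trans
    (Real.rpow_le_rpow_of_exponent_le ha (neg_abs_le s))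

lemma osc_bound (N ξ : ℝ) (hN : 100 ≤ N) (hξ1 : N + 2 ≤ ξ) (hξ2 : ξ ≤ N + 3) :
    |∫ x in (1:ℝ)..2, Real.cos (ξ^2 - x^2 + (ξ - x)^3)| ≤ 1/2 := by
  set φ : ℝ → ℝ := fun x => ξ^2 - x^2 + (ξ - x)^3 with hφ
  set ψ : ℝ → ℝ := fun x => -(2*x) - 3*(ξ - x)^2 with hψ
  set ψ' : ℝ → ℝ := fun x => -2 + 6*(ξ - x) with hψ'
  have hNpos : (0:ℝ) < N := by linarith
  -- bounds on ψ on [1,2]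
  have hψ_neg : ∀ x ∈ Icc (1:ℝ) 2, ψ x ≤ -(3*N^2) := by
    intro x hx
    have h1 : N ≤ ξ - x := by cases hx; linarith
    have : N^2 ≤ (ξ - x)^2 := by nlinarith
    simp only [hψ]; cases hx; nlinarith
  have hψ_ne : ∀ x ∈ Icc (1:ℝ) 2, ψ x ≠ 0 := fun x hx => by
    have := hψ_neg x hx; nlinarith
  have hψ_abs : ∀ x ∈ Icc (1:ℝ) 2, 3*N^2 ≤ |ψ x| := by
    intro x hx
    have := hψ_neg x hx
    rw [abs_of_nonpos (by nlinarith)]; linarith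
  -- derivatives
  have hφD : ∀ x : ℝ, HasDerivAt φ (ψ x) x := by
    intro x
    have h1 : HasDerivAt (fun x : ℝ => ξ - x) (-1) x := by
      simpa using (hasDerivAt_id x).const_sub ξ
    have h2 : HasDerivAt (fun x : ℝ => (ξ - x)^3) (3 * (ξ - x)^(3-1) * (-1)) x := by
      simpa using h1.fun_pow 3
    have h3 : HasDerivAt (fun x : ℝ => ξ^2 - x^2) (0 - 2*x) x := by
      simpa using ((hasDerivAt_pow 2 x)).const_sub (ξ^2)
    have := h3.add h2
    refine this.congr_deriv ?_
    simp [hψ]; ring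
  have hψD : ∀ x : ℝ, HasDerivAt ψ (ψ' x) x := by
    intro x
    have h1 : HasDerivAt (fun x : ℝ => ξ - x) (-1) x := by
      simpa using (hasDerivAt_id x).const_sub ξ
    have h2 : HasDerivAt (fun x : ℝ => 3*(ξ - x)^2) (3*(2 * (ξ - x)^(2-1) * (-1))) x :=
      (h1.pow 2).const_mul 3
    have h3 : HasDerivAt (fun x : ℝ => -(2*x)) (-2) x := by
      simpa using ((hasDerivAt_id x).const_mul 2).fun_neg
    have := h3.sub h2
    refine this.congr_deriv ?_
    simp [hψ']; ring
  -- F and its derivative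
  set F : ℝ → ℝ := fun x => Real.sin (φ x) / ψ x with hF
  set G : ℝ → ℝ := fun x => (Real.cos (φ x) * ψ x * ψ x - Real.sin (φ x) * ψ' x) / (ψ x)^2
    with hG
  have hFD : ∀ x ∈ Icc (1:ℝ) 2, HasDerivAt F (G x) x := by
    intro x hx
    have h1 : HasDerivAt (fun x => Real.sin (φ x)) (Real.cos (φ x) * ψ x) x :=
      (Real.hasDerivAt_sin (φ x)).comp x (hφD x)
    exact h1.div (hψD x) (hψ_ne x hx)
  -- continuity
  have hφc : Continuous φ := by fun_prop
  have hψc : Continuous ψ := by fun_prop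
  have hψ'c : Continuous ψ' := by fun_prop
  have hGc : ContinuousOn G (Icc (1:ℝ) 2) := by
    apply ContinuousOn.div
    · fun_prop
    · fun_prop
    · intro x hx; exact pow_ne_zero 2 (hψ_ne x hx)
  have huIcc : uIcc (1:ℝ) 2 = Icc 1 2 := uIcc_of_le (by norm_num)
  have hGint : IntervalIntegrable G volume 1 2 := by
    apply ContinuousOn.intervalIntegrable; rwa [huIcc]
  have hIBP : ∫ x in (1:ℝ)..2, G x = F 2 - F 1 := by
    apply intervalIntegral.integral_eq_sub_of_hasDerivAt
    · intro x hx; exact hFD x (huIcc ▸ hx)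
    · exact hGint
  -- second piece
  set H : ℝ → ℝ := fun x => Real.sin (φ x) * ψ' x / (ψ x)^2 with hH
  have hHc : ContinuousOn H (Icc (1:ℝ) 2) := by
    apply ContinuousOn.div
    · fun_prop
    · fun_prop
    · intro x hx; exact pow_ne_zero 2 (hψ_ne x hx)
  have hHint : IntervalIntegrable H volume 1 2 := by
    apply ContinuousOn.intervalIntegrable; rwa [huIcc]
  have hsplit : ∫ x in (1:ℝ)..2, Real.cos (φ x) = (∫ x in (1:ℝ)..2, G x) + ∫ x in (1:ℝ)..2, H x := by
    rw [← intervalIntegral.integral_add hGint hHint]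
    apply intervalIntegral.integral_congr
    intro x hx
    have hne := hψ_ne x (huIcc ▸ hx)
    simp only [hG, hH]
    field_simp
    ring
  -- bounds
  have hF_bd : ∀ x ∈ Icc (1:ℝ) 2, |F x| ≤ 1/(3*N^2) := by
    intro x hx
    rw [hF, abs_div]
    exact div_le_div₀ (by norm_num) (Real.abs_sin_le_one _) (by positivity) (hψ_abs x hx)
  have hH_bd : ∀ x ∈ Icc (1:ℝ) 2, ‖H x‖ ≤ 7/(9*N^3) := by
    intro x hx
    have h1 : N ≤ ξ - x ∧ ξ - x ≤ N + 2 := by constructor <;> (cases hx; linarith)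
    have hψ'bd : |ψ' x| ≤ 7*N := by
      rw [abs_le]; constructor <;> simp only [hψ'] <;> nlinarith [h1.1, h1.2]
    have hψsq : 9*N^4 ≤ (ψ x)^2 := by
      have := hψ_abs x hx
      nlinarith [abs_nonneg (ψ x), _root_.sq_abs (ψ x)]
    rw [Real.norm_eq_abs, hH, abs_div, abs_mul, _root_.abs_pow, _root_.sq_abs]
    calc |Real.sin (φ x)| * |ψ' x| / (ψ x)^2 ≤ 1 * (7*N) / (9*N^4) := by
          apply div_le_div₀ (by positivity) ?_ (by positivity) hψsq
          exact mul_le_mul (Real.abs_sin_le_one _) hψ'bd (abs_nonneg _) (by norm_num)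
      _ = 7/(9*N^3) := by field_simp
  have hHbd : |∫ x in (1:ℝ)..2, H x| ≤ 7/(9*N^3) * |(2:ℝ) - 1| := by
    rw [← Real.norm_eq_abs]
    apply intervalIntegral.norm_integral_le_of_norm_le_const
    intro x hx
    have : x ∈ Icc (1:ℝ) 2 := by
      rw [uIoc_of_le (by norm_num : (1:ℝ) ≤ 2)] at hx
      exact Ioc_subset_Icc_self hx
    exact hH_bd x this
  have hmem1 : (1:ℝ) ∈ Icc (1:ℝ) 2 := by norm_num
  have hmem2 : (2:ℝ) ∈ Icc (1:ℝ) 2 := by norm_num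
  have hb1 : 2/(3*N^2) ≤ 1/4 := by
    rw [div_le_div_iff₀ (by positivity) (by norm_num)]; nlinarith
  have hb2 : 7/(9*N^3) ≤ 1/4 := by
    rw [div_le_div_iff₀ (by positivity) (by norm_num)]; nlinarith
  calc |∫ x in (1:ℝ)..2, Real.cos (φ x)|
      ≤ |(∫ x in (1:ℝ)..2, G x)| + |∫ x in (1:ℝ)..2, H x| := by
        rw [hsplit]; exact abs_add_le _ _
    _ ≤ (|F 2| + |F 1|) + 7/(9*N^3) * |(2:ℝ) - 1| := by
        gcongr
        rw [hIBP]; exact (abs_sub _ _)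
    _ ≤ (1/(3*N^2) + 1/(3*N^2)) + 7/(9*N^3) := by
        rw [show |(2:ℝ) - 1| = 1 by norm_num, mul_one]
        gcongr <;> [exact hF_bd 2 hmem2; exact hF_bd 1 hmem1]
    _ = 2/(3*N^2) + 7/(9*N^3) := by ring
    _ ≤ 1/4 + 1/4 := by gcongr
    _ = 1/2 := by norm_num

lemma jap_cont : Continuous jap := Real.continuous_sqrt.comp (by fun_prop)

lemma jap_rpow_cont (s : ℝ) : Continuous (fun x => jap x ^ s) := by
  rw [continuous_iff_continuousAt]; intro x
  exact (Real.continuousAt_rpow_const _ _ (Or.inl (jap_pos x).ne')).comp jap_cont.continuousAt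

lemma rpow_scaled_upper {b N s : ℝ} (hN : 0 < N) (h1 : N ≤ b) (h2 : b ≤ 2*N) :
    b ^ s ≤ N ^ s * 2 ^ |s| := by
  have hb : b = N * (b/N) := by field_simp
  have h1' : (1:ℝ) ≤ b/N := (one_le_div hN).mpr h1
  have h2' : b/N ≤ 2 := (div_le_iff₀ hN).mpr (by linarith)
  rw [hb, Real.mul_rpow hN.le (by positivity)]
  exact mul_le_mul_of_nonneg_left (rpow_upper h1' h2') (Real.rpow_pos_of_pos hN s).le

lemma rpow_scaled_lower {b N s : ℝ} (hN : 0 < N) (h1 : N ≤ b) (h2 : b ≤ 2*N) :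
    N ^ s * 2 ^ (-|s|) ≤ b ^ s := by
  have hb : b = N * (b/N) := by field_simp
  have h1' : (1:ℝ) ≤ b/N := (one_le_div hN).mpr h1
  have h2' : b/N ≤ 2 := (div_le_iff₀ hN).mpr (by linarith)
  rw [hb, Real.mul_rpow hN.le (by positivity)]
  exact mul_le_mul_of_nonneg_left (rpow_lower h1' h2') (Real.rpow_pos_of_pos hN s).le



/-- The Schrödinger–Airy bilinear operator at time 1, Fourier side:
`T f g (ξ) = ⟨ξ⟩^{s₁} |∫ (1-e^{iφ})/φ · f(ξ₁) g(ξ-ξ₁) / (⟨ξ₁⟩^{s₁}⟨ξ-ξ₁⟩^{s₂}) dξ₁|`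
with resonance function `φ = ξ² - ξ₁² + (ξ-ξ₁)³`. -/
def skOp (s₁ s₂ : ℝ) (f g : ℝ → ℂ) (ξ : ℝ) : ℝ :=
  jap ξ ^ s₁ * ‖∫ ξ₁ : ℝ,
    ((1 - Complex.exp (Complex.I * ((ξ ^ 2 - ξ₁ ^ 2 + (ξ - ξ₁) ^ 3 : ℝ) : ℂ))) /
        ((ξ ^ 2 - ξ₁ ^ 2 + (ξ - ξ₁) ^ 3 : ℝ) : ℂ)) *
      f ξ₁ * g (ξ - ξ₁) / ((jap ξ₁ ^ s₁ * jap (ξ - ξ₁) ^ s₂ : ℝ) : ℂ)‖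

lemma main_est (s₁ s₂ N ξ : ℝ) (hN : 100 ≤ N) (hξ1 : N + 2 ≤ ξ) (hξ2 : ξ ≤ N + 3) :
    (6 * (2 ^ |s₁| * 5 ^ |s₁| * 2 ^ |s₂|))⁻¹ * N^(s₁-s₂-3) ≤
        skOp s₁ s₂ (fun x => if 1 ≤ x ∧ x ≤ 2 then 1 else 0)
          (fun x => if N ≤ x ∧ x ≤ N + 4 then 1 else 0) ξ ∧
      skOp s₁ s₂ (fun x => if 1 ≤ x ∧ x ≤ 2 then 1 else 0)
          (fun x => if N ≤ x ∧ x ≤ N + 4 then 1 else 0) ξ ≤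
        (2 * (2 ^ |s₁| * 5 ^ |s₁| * 2 ^ |s₂|)) * N^(s₁-s₂-3) := by
  have hNpos : (0:ℝ) < N := by linarith
  set φ : ℝ → ℝ := fun x => ξ^2 - x^2 + (ξ - x)^3 with hφdef
  set w : ℝ → ℝ := fun x => jap x ^ s₁ * jap (ξ - x) ^ s₂ with hwdef
  set K : ℝ → ℂ := fun x =>
    ((1 - Complex.exp (Complex.I * ((φ x : ℝ) : ℂ))) / ((φ x : ℝ) : ℂ)) / ((w x : ℝ) : ℂ)
    with hKdef
  -- step 1 : the integral reduces to a set integral of K over Icc 1 2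
  have hind : (fun x : ℝ =>
      ((1 - Complex.exp (Complex.I * ((ξ ^ 2 - x ^ 2 + (ξ - x) ^ 3 : ℝ) : ℂ))) /
          ((ξ ^ 2 - x ^ 2 + (ξ - x) ^ 3 : ℝ) : ℂ)) *
        (fun x => if 1 ≤ x ∧ x ≤ 2 then (1:ℂ) else 0) x *
        (fun x => if N ≤ x ∧ x ≤ N + 4 then (1:ℂ) else 0) (ξ - x) /
        ((jap x ^ s₁ * jap (ξ - x) ^ s₂ : ℝ) : ℂ))
      = (Set.Icc (1:ℝ) 2).indicator K := by
    funext x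
    by_cases hx : x ∈ Set.Icc (1:ℝ) 2
    · obtain ⟨hx1, hx2⟩ := hx
      rw [Set.indicator_of_mem (Set.mem_Icc.mpr ⟨hx1, hx2⟩)]
      have hg : N ≤ ξ - x ∧ ξ - x ≤ N + 4 := ⟨by linarith, by linarith⟩
      simp only [if_pos (And.intro hx1 hx2), if_pos hg, mul_one, hKdef, hφdef, hwdef]
    · rw [Set.indicator_of_notMem hx]
      rw [Set.mem_Icc] at hx
      simp only [if_neg hx, mul_zero, zero_mul, zero_div]
  -- bounds on φ
  have hφ_lb : ∀ x ∈ Set.Icc (1:ℝ) 2, N^3 ≤ φ x := by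
    intro x hx; obtain ⟨h1, h2⟩ := hx
    have h5 : N ≤ ξ - x := by linarith
    have h6 : N^3 ≤ (ξ - x)^3 := pow_le_pow_left₀ hNpos.le h5 3
    have h7 : x^2 ≤ ξ^2 := pow_le_pow_left₀ (by linarith) (by linarith) 2
    simp only [hφdef]; linarith
  have hφ_ub : ∀ x ∈ Set.Icc (1:ℝ) 2, φ x ≤ 3*N^3 := by
    intro x hx; obtain ⟨h1, h2⟩ := hx
    have h3 : ξ - x ≤ N + 2 := by linarith
    have h4 : 0 ≤ ξ - x := by linarith
    have h5 : (ξ - x)^3 ≤ (N+2)^3 := pow_le_pow_left₀ h4 h3 3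
    have h6 : ξ^2 ≤ (N+3)^2 := pow_le_pow_left₀ (by linarith) (by linarith) 2
    simp only [hφdef]; nlinarith [sq_nonneg x]
  have hφ_pos : ∀ x ∈ Set.Icc (1:ℝ) 2, 0 < φ x := fun x hx =>
    lt_of_lt_of_le (by positivity) (hφ_lb x hx)
  -- bounds on w
  have hw_pos : ∀ x : ℝ, 0 < w x := fun x =>
    mul_pos (Real.rpow_pos_of_pos (jap_pos x) s₁) (Real.rpow_pos_of_pos (jap_pos _) s₂)
  have hjapx : ∀ x ∈ Set.Icc (1:ℝ) 2, 5^(-|s₁|) ≤ jap x ^ s₁ ∧ jap x ^ s₁ ≤ 5^|s₁| := by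
    intro x hx; obtain ⟨h1, h2⟩ := hx
    have hj1 : 1 ≤ jap x := jap_ge_one x
    have hj2 : jap x ≤ 5 := jap_le (by nlinarith) (by norm_num)
    exact ⟨rpow_lower hj1 hj2, rpow_upper hj1 hj2⟩
  have hjap2 : ∀ x ∈ Set.Icc (1:ℝ) 2,
      N^s₂ * 2^(-|s₂|) ≤ jap (ξ - x) ^ s₂ ∧ jap (ξ - x) ^ s₂ ≤ N^s₂ * 2^|s₂| := by
    intro x hx; obtain ⟨h1, h2⟩ := hx
    have hy1 : N ≤ ξ - x := by linarith
    have hj1 : N ≤ jap (ξ - x) := le_trans hy1 (jap_ge_self (by linarith))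
    have hj2 : jap (ξ - x) ≤ 2*N := jap_le (by nlinarith) (by linarith)
    exact ⟨rpow_scaled_lower hNpos hj1 hj2, rpow_scaled_upper hNpos hj1 hj2⟩
  have hw_ub : ∀ x ∈ Set.Icc (1:ℝ) 2, w x ≤ 5^|s₁| * (N^s₂ * 2^|s₂|) := by
    intro x hx
    exact mul_le_mul (hjapx x hx).2 (hjap2 x hx).2
      (Real.rpow_pos_of_pos (jap_pos _) s₂).le (by positivity)
  have hw_lb : ∀ x ∈ Set.Icc (1:ℝ) 2, 5^(-|s₁|) * (N^s₂ * 2^(-|s₂|)) ≤ w x := by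
    intro x hx
    exact mul_le_mul (hjapx x hx).1 (hjap2 x hx).1 (by positivity)
      (Real.rpow_pos_of_pos (jap_pos _) s₁).le
  -- continuity / integrability of K on Icc 1 2
  have hφc : Continuous φ := by fun_prop
  have hwc : Continuous w := ((jap_rpow_cont s₁)).mul
    ((jap_rpow_cont s₂).comp (by fun_prop : Continuous fun x : ℝ => ξ - x))
  have hKc : ContinuousOn K (Set.Icc (1:ℝ) 2) := by
    apply ContinuousOn.div
    · apply ContinuousOn.div
      · exact (continuous_const.sub (Complex.continuous_exp.comp
          (continuous_const.mul (Complex.continuous_ofReal.comp hφc)))).continuousOn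
      · exact (Complex.continuous_ofReal.comp hφc).continuousOn
      · intro x hx; exact Complex.ofReal_ne_zero.mpr (hφ_pos x hx).ne'
    · exact (Complex.continuous_ofReal.comp hwc).continuousOn
    · intro x hx; exact Complex.ofReal_ne_zero.mpr (hw_pos x).ne'
  have hKint : IntegrableOn K (Set.Icc (1:ℝ) 2) volume := hKc.integrableOn_Icc
  -- rewrite skOp as a set integral
  have hskOp : skOp s₁ s₂ (fun x => if 1 ≤ x ∧ x ≤ 2 then 1 else 0)
      (fun x => if N ≤ x ∧ x ≤ N + 4 then 1 else 0) ξ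
      = jap ξ ^ s₁ * ‖∫ x in Set.Icc (1:ℝ) 2, K x‖ := by
    rw [skOp]
    congr 2
    rw [← integral_indicator measurableSet_Icc, ← hind]
  -- bound on jap ξ ^ s₁
  have hjapξ_ub : jap ξ ^ s₁ ≤ N^s₁ * 2 ^ |s₁| := by
    apply rpow_scaled_upper hNpos (le_trans (by linarith) (jap_ge_self (by linarith)))
    exact jap_le (by nlinarith) (by linarith)
  have hjapξ_lb : N^s₁ * 2 ^ (-|s₁|) ≤ jap ξ ^ s₁ := by
    apply rpow_scaled_lower hNpos (le_trans (by linarith) (jap_ge_self (by linarith)))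
    exact jap_le (by nlinarith) (by linarith)
  -- positivity facts for final arithmetic
  have hp1 : (0:ℝ) < N^s₁ := Real.rpow_pos_of_pos hNpos s₁
  have hp2 : (0:ℝ) < N^s₂ := Real.rpow_pos_of_pos hNpos s₂
  have hp3 : (0:ℝ) < 2^|s₁| := Real.rpow_pos_of_pos (by norm_num) _
  have hp4 : (0:ℝ) < 5^|s₁| := Real.rpow_pos_of_pos (by norm_num) _
  have hp5 : (0:ℝ) < 2^|s₂| := Real.rpow_pos_of_pos (by norm_num) _
  have hNrw : N^(s₁-s₂-3) = N^s₁ * (N^s₂)⁻¹ * (N^3)⁻¹ := by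
    rw [show s₁ - s₂ - 3 = s₁ + (-s₂) + (-(3:ℕ)) by push_cast; ring,
      Real.rpow_add hNpos, Real.rpow_add hNpos, Real.rpow_neg hNpos.le,
      Real.rpow_neg hNpos.le, Real.rpow_natCast]
  have hr1 : (5:ℝ)^(-|s₁|) = (5^|s₁|)⁻¹ := Real.rpow_neg (by norm_num) _
  have hr2 : (2:ℝ)^(-|s₂|) = (2^|s₂|)⁻¹ := Real.rpow_neg (by norm_num) _
  have hr3 : (2:ℝ)^(-|s₁|) = (2^|s₁|)⁻¹ := Real.rpow_neg (by norm_num) _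
  constructor
  · -- LOWER BOUND
    set D : ℝ := 3*N^3 * (5^|s₁| * (N^s₂ * 2^|s₂|)) with hDdef
    have hDpos : 0 < D := by positivity
    have hreK : ∀ x ∈ Set.Icc (1:ℝ) 2, (K x).re = (1 - Real.cos (φ x)) / (φ x * w x) := by
      intro x hx
      have hKx : K x = (1 - Complex.exp (Complex.I * ((φ x : ℝ) : ℂ))) / ((φ x * w x : ℝ) : ℂ) := by
        simp only [hKdef]
        rw [div_div]
        congr 1
        simp only [hwdef]
        push_cast
        ring
      rw [hKx, Complex.div_ofReal_re]
      congr 1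
      rw [Complex.sub_re, Complex.one_re, mul_comm Complex.I, Complex.exp_ofReal_mul_I_re]
    have h1 : ∀ x ∈ Set.Icc (1:ℝ) 2, (1 - Real.cos (φ x)) / D ≤ (K x).re := by
      intro x hx
      rw [hreK x hx]
      have hle : φ x * w x ≤ D := by
        rw [hDdef]
        exact mul_le_mul (hφ_ub x hx) (hw_ub x hx) (hw_pos x).le (by positivity)
      have hcos : 0 ≤ 1 - Real.cos (φ x) := by linarith [Real.cos_le_one (φ x)]
      have hpos : 0 < φ x * w x := mul_pos (hφ_pos x hx) (hw_pos x)
      gcongr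
    have hint2 : IntegrableOn (fun x => (1 - Real.cos (φ x))/D) (Set.Icc (1:ℝ) 2) volume := by
      apply Continuous.integrableOn_Icc
      fun_prop
    have h2 : ∫ x in Set.Icc (1:ℝ) 2, (1 - Real.cos (φ x))/D
        ≤ ∫ x in Set.Icc (1:ℝ) 2, (K x).re :=
      setIntegral_mono_on hint2 hKint.re measurableSet_Icc h1
    have h4 : (1:ℝ)/2 ≤ ∫ x in Set.Icc (1:ℝ) 2, (1 - Real.cos (φ x)) := by
      rw [integral_Icc_eq_integral_Ioc, ← intervalIntegral.integral_of_le (by norm_num : (1:ℝ) ≤ 2)]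
      have hcint : IntervalIntegrable (fun x => Real.cos (φ x)) volume 1 2 := by
        apply Continuous.intervalIntegrable; fun_prop
      rw [intervalIntegral.integral_sub (intervalIntegrable_const) hcint,
        intervalIntegral.integral_const]
      have hosc := osc_bound N ξ hN hξ1 hξ2
      have habs := (abs_le.mp (by simpa only [hφdef] using hosc)).2
      simp only [smul_eq_mul]
      norm_num
      linarith
    have h3 : ∫ x in Set.Icc (1:ℝ) 2, (1 - Real.cos (φ x))/D
        = (∫ x in Set.Icc (1:ℝ) 2, (1 - Real.cos (φ x)))/D := integral_div _ _
    have hre_eq : ∫ x in Set.Icc (1:ℝ) 2, (K x).re = (∫ x in Set.Icc (1:ℝ) 2, K x).re :=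
      integral_re hKint
    have h5 : 1/(2*D) ≤ (∫ x in Set.Icc (1:ℝ) 2, K x).re := by
      rw [← hre_eq]
      calc 1/(2*D) = (1/2)/D := by ring
      _ ≤ (∫ x in Set.Icc (1:ℝ) 2, (1 - Real.cos (φ x)))/D := by gcongr
      _ = ∫ x in Set.Icc (1:ℝ) 2, (1 - Real.cos (φ x))/D := h3.symm
      _ ≤ _ := h2
    have h6 : 1/(2*D) ≤ ‖∫ x in Set.Icc (1:ℝ) 2, K x‖ := by
      refine h5.trans ?_
      exact Complex.re_le_norm _
    rw [hskOp]
    calc (6 * (2 ^ |s₁| * 5 ^ |s₁| * 2 ^ |s₂|))⁻¹ * N^(s₁-s₂-3)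
        = (N^s₁ * 2^(-|s₁|)) * (1/(2*D)) := by
          rw [hNrw, hr3, hDdef]
          field_simp [hp1.ne', hp2.ne', hp3.ne', hp4.ne', hp5.ne', hNpos.ne']
          ring
      _ ≤ jap ξ ^ s₁ * ‖∫ x in Set.Icc (1:ℝ) 2, K x‖ := by
          apply mul_le_mul hjapξ_lb h6 (by positivity)
          exact (Real.rpow_pos_of_pos (jap_pos ξ) s₁).le
  · -- UPPER BOUND
    have hK_bd : ∀ x ∈ Set.Icc (1:ℝ) 2,
        ‖K x‖ ≤ 2 / (N^3 * (5^(-|s₁|) * (N^s₂ * 2^(-|s₂|)))) := by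
      intro x hx
      have hnum : ‖1 - Complex.exp (Complex.I * ((φ x : ℝ) : ℂ))‖ ≤ 2 := by
        calc ‖1 - Complex.exp (Complex.I * ((φ x : ℝ) : ℂ))‖
            ≤ ‖(1:ℂ)‖ + ‖Complex.exp (Complex.I * ((φ x : ℝ) : ℂ))‖ := norm_sub_le _ _
          _ ≤ 2 := by
            rw [Complex.norm_exp]
            simp [Complex.mul_re]
            norm_num
      rw [hKdef]
      simp only []
      rw [div_div, norm_div, norm_mul,
        Complex.norm_real, Complex.norm_real, Real.norm_eq_abs, Real.norm_eq_abs,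
        abs_of_pos (hφ_pos x hx), abs_of_pos (hw_pos x)]
      have hden : (0:ℝ) < N^3 * (5^(-|s₁|) * (N^s₂ * 2^(-|s₂|))) :=
        mul_pos (pow_pos hNpos 3) (mul_pos (Real.rpow_pos_of_pos (by norm_num) _)
          (mul_pos hp2 (Real.rpow_pos_of_pos (by norm_num) _)))
      apply div_le_div₀ (by norm_num) hnum hden
      exact mul_le_mul (hφ_lb x hx) (hw_lb x hx)
        (mul_pos (Real.rpow_pos_of_pos (by norm_num) _)
          (mul_pos hp2 (Real.rpow_pos_of_pos (by norm_num) _))).le (hφ_pos x hx).le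
    have hnorm_ub : ‖∫ x in Set.Icc (1:ℝ) 2, K x‖
        ≤ 2 / (N^3 * (5^(-|s₁|) * (N^s₂ * 2^(-|s₂|)))) * (volume (Set.Icc (1:ℝ) 2)).toReal := by
      apply norm_setIntegral_le_of_norm_le_const ?_ hK_bd
      rw [Real.volume_Icc]; exact ENNReal.ofReal_lt_top
    have hvol : (volume (Set.Icc (1:ℝ) 2)).toReal = 1 := by
      rw [Real.volume_Icc]; norm_num
    rw [hvol, mul_one] at hnorm_ub
    rw [hskOp]
    calc jap ξ ^ s₁ * ‖∫ x in Set.Icc (1:ℝ) 2, K x‖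
        ≤ (N^s₁ * 2^|s₁|) * (2 / (N^3 * (5^(-|s₁|) * (N^s₂ * 2^(-|s₂|))))) := by
          apply mul_le_mul hjapξ_ub hnorm_ub (norm_nonneg _) (mul_pos hp1 hp3).le
      _ = (2 * (2 ^ |s₁| * 5 ^ |s₁| * 2 ^ |s₂|)) * N^(s₁-s₂-3) := by
          rw [hNrw, hr1, hr2]
          field_simp [hp1.ne', hp2.ne', hp3.ne', hp4.ne', hp5.ne', hNpos.ne']

/-- With `f = χ_{[1,2]}`, `g = χ_{[N,N+4]}` and `N` large, the quantity is comparable to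
`N^{s₁-s₂-3}` for every `ξ ∈ [N+2,N+3]`; consequently `L²×L² → L²` boundedness
forces `s₂ ≥ s₁ - 3`. -/
theorem sk_iterate_lower_bound (s₁ s₂ : ℝ) :
    (∃ c C N₀ : ℝ, 0 < c ∧ 0 < C ∧ 0 < N₀ ∧ ∀ N : ℝ, N₀ ≤ N →
      ∀ ξ ∈ Icc (N + 2) (N + 3),
        c * N ^ (s₁ - s₂ - 3) ≤
            skOp s₁ s₂ (fun x => if 1 ≤ x ∧ x ≤ 2 then 1 else 0)
              (fun x => if N ≤ x ∧ x ≤ N + 4 then 1 else 0) ξ ∧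
          skOp s₁ s₂ (fun x => if 1 ≤ x ∧ x ≤ 2 then 1 else 0)
              (fun x => if N ≤ x ∧ x ≤ N + 4 then 1 else 0) ξ ≤
            C * N ^ (s₁ - s₂ - 3)) ∧
    ((∃ C : ℝ, 0 < C ∧ ∀ f g : ℝ → ℂ,
        eLpNorm (fun ξ => skOp s₁ s₂ f g ξ) 2 volume ≤
          ENNReal.ofReal C * eLpNorm f 2 volume * eLpNorm g 2 volume) →
      s₁ - 3 ≤ s₂) := by
  
  have hBpos : (0:ℝ) < 2 ^ |s₁| * 5 ^ |s₁| * 2 ^ |s₂| :=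
    mul_pos (mul_pos (Real.rpow_pos_of_pos (by norm_num) _)
      (Real.rpow_pos_of_pos (by norm_num) _)) (Real.rpow_pos_of_pos (by norm_num) _)
  set c : ℝ := (6 * (2 ^ |s₁| * 5 ^ |s₁| * 2 ^ |s₂|))⁻¹ with hcdef
  set C : ℝ := 2 * (2 ^ |s₁| * 5 ^ |s₁| * 2 ^ |s₂|) with hCdef
  have hcpos : 0 < c := by rw [hcdef]; positivity
  have hCpos : 0 < C := by rw [hCdef]; positivity
  have hpart1 : ∀ N : ℝ, (100:ℝ) ≤ N → ∀ ξ ∈ Icc (N + 2) (N + 3),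
      c * N ^ (s₁ - s₂ - 3) ≤
          skOp s₁ s₂ (fun x => if 1 ≤ x ∧ x ≤ 2 then 1 else 0)
            (fun x => if N ≤ x ∧ x ≤ N + 4 then 1 else 0) ξ ∧
        skOp s₁ s₂ (fun x => if 1 ≤ x ∧ x ≤ 2 then 1 else 0)
            (fun x => if N ≤ x ∧ x ≤ N + 4 then 1 else 0) ξ ≤
          C * N ^ (s₁ - s₂ - 3) := by
    intro N hN ξ hξ
    exact main_est s₁ s₂ N ξ hN hξ.1 hξ.2
  refine ⟨⟨c, C, 100, hcpos, hCpos, by norm_num, hpart1⟩, ?_⟩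
  rintro ⟨C', hC'pos, hbound⟩
  by_contra hcon
  push_neg at hcon
  set α : ℝ := s₁ - s₂ - 3 with hαdef
  have hαpos : 0 < α := by rw [hαdef]; linarith
  -- choose N large
  set N : ℝ := max 100 (max 1 ((4*C'/c) ^ α⁻¹)) with hNdef
  have hN100 : (100:ℝ) ≤ N := le_max_left _ _
  have hNpos : (0:ℝ) < N := by linarith
  have hN1 : (1:ℝ) ≤ N := by linarith
  have hNb : (4*C'/c) ^ α⁻¹ ≤ N := le_trans (le_max_right _ _) (le_max_right _ _)
  have hbase : (0:ℝ) ≤ 4*C'/c := by positivity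
  have hNα : 4*C'/c ≤ N ^ α := by
    calc 4*C'/c = ((4*C'/c) ^ α⁻¹) ^ α := by
          rw [← Real.rpow_mul hbase, inv_mul_cancel₀ hαpos.ne', Real.rpow_one]
      _ ≤ N ^ α := Real.rpow_le_rpow (Real.rpow_nonneg hbase _) hNb hαpos.le
  -- the two test functions
  set f : ℝ → ℂ := fun x => if 1 ≤ x ∧ x ≤ 2 then 1 else 0 with hfdef
  set g : ℝ → ℂ := fun x => if N ≤ x ∧ x ≤ N + 4 then 1 else 0 with hgdef
  have hf_ind : f = (Icc (1:ℝ) 2).indicator (fun _ => (1:ℂ)) := by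
    funext x; simp [hfdef, Set.indicator, Set.mem_Icc]
  have hg_ind : g = (Icc N (N+4)).indicator (fun _ => (1:ℂ)) := by
    funext x; simp [hgdef, Set.indicator, Set.mem_Icc]
  have hf_norm : eLpNorm f 2 volume = 1 := by
    rw [hf_ind, eLpNorm_indicator_const measurableSet_Icc (by norm_num) (by norm_num)]
    simp [Real.volume_Icc]
    norm_num
  have hg_norm : eLpNorm g 2 volume = ENNReal.ofReal 2 := by
    rw [hg_ind, eLpNorm_indicator_const measurableSet_Icc (by norm_num) (by norm_num)]
    have hvol : volume (Icc N (N+4)) = ENNReal.ofReal 4 := by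
      rw [Real.volume_Icc]; norm_num
    rw [hvol]
    have h2 : ((2:ℕ):ℝ≥0∞).toReal = 2 := by norm_num
    have : (ENNReal.ofReal 4) ^ ((1:ℝ)/2) = ENNReal.ofReal 2 := by
      rw [ENNReal.ofReal_rpow_of_pos (by norm_num)]
      congr 1
      rw [show (4:ℝ) = 2^(2:ℕ) by norm_num, ← Real.rpow_natCast 2 2,
        ← Real.rpow_mul (by norm_num)]
      norm_num
    simp only [show ((2:ℝ≥0∞)).toReal = 2 from by norm_num, this]
    simp
  -- lower bound on eLpNorm of skOp
  set a : ℝ := c * N ^ α with hadef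
  have hapos : 0 < a := mul_pos hcpos (Real.rpow_pos_of_pos hNpos α)
  have hskOp_lb : ∀ ξ ∈ Icc (N+2) (N+3), a ≤ skOp s₁ s₂ f g ξ := by
    intro ξ hξ
    exact (hpart1 N hN100 ξ hξ).1
  have hLB : ENNReal.ofReal a ≤ eLpNorm (fun ξ => skOp s₁ s₂ f g ξ) 2 volume := by
    rw [eLpNorm_eq_lintegral_rpow_enorm_toReal (by norm_num : (2:ℝ≥0∞) ≠ 0) (by norm_num)]
    have h2 : ((2:ℝ≥0∞)).toReal = 2 := by norm_num
    rw [h2]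
    have hpt : (Icc (N+2) (N+3)).indicator (fun _ => (ENNReal.ofReal a) ^ (2:ℝ))
        ≤ fun ξ => (‖skOp s₁ s₂ f g ξ‖₊ : ℝ≥0∞) ^ (2:ℝ) := by
      intro ξ
      by_cases hξ : ξ ∈ Icc (N+2) (N+3)
      · rw [Set.indicator_of_mem hξ]
        apply ENNReal.rpow_le_rpow ?_ (by norm_num)
        rw [← enorm_eq_nnnorm, ← ofReal_norm]
        apply ENNReal.ofReal_le_ofReal
        exact le_trans (hskOp_lb ξ hξ) (le_abs_self _)
      · rw [Set.indicator_of_notMem hξ]; exact zero_le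
    have hIcc : volume (Icc (N+2) (N+3)) = 1 := by
      rw [Real.volume_Icc]
      norm_num
    calc ENNReal.ofReal a
        = ((ENNReal.ofReal a) ^ (2:ℝ) * 1) ^ ((1:ℝ)/2) := by
          rw [mul_one, ← ENNReal.rpow_mul]
          norm_num
      _ ≤ (∫⁻ ξ, (‖skOp s₁ s₂ f g ξ‖₊ : ℝ≥0∞) ^ (2:ℝ)) ^ ((1:ℝ)/2) := by
          apply ENNReal.rpow_le_rpow ?_ (by norm_num)
          calc (ENNReal.ofReal a) ^ (2:ℝ) * 1
              = ∫⁻ ξ, (Icc (N+2) (N+3)).indicator (fun _ => (ENNReal.ofReal a) ^ (2:ℝ)) ξ := by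
                rw [lintegral_indicator measurableSet_Icc, setLIntegral_const, hIcc]
            _ ≤ _ := lintegral_mono hpt
  -- combine
  have hcomb := (hLB.trans (hbound f g))
  rw [hf_norm, hg_norm, mul_one] at hcomb
  rw [← ENNReal.ofReal_mul hC'pos.le] at hcomb
  have hle : a ≤ C' * 2 := (ENNReal.ofReal_le_ofReal_iff (by positivity)).mp hcomb
  have : (4:ℝ)*C' ≤ c * N ^ α := by
    calc (4:ℝ)*C' = c * (4*C'/c) := by field_simp
    _ ≤ c * N ^ α := by
      apply mul_le_mul_of_nonneg_left hNα hcpos.le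
  rw [hadef] at hle
  linarith
end
end

section
/- There is a constant C such that for all ξ with |ξ| sufficiently large, ‖χ_{|y(ξ₂)| ≪ 1} (1 - e^{iξ₂(2ξ-ξ₂+ξ₂²)})/(2ξ-ξ₂+ξ₂²)‖²_{L²({ξ₂ : |ξ₂| ≫ 1})} ≤ C, where y(ξ₂) = 2ξ - ξ₂ + ξ₂². The proof uses the change of variables y = y(ξ₂) with |dy| ∼ |ξ|^{1/2}|dξ₂| on the set |y| ≪ 1, and the bound |1-e^{iξ₂ y}| ≲ min{1, |ξ|^{1/2}|y|}, giving ∫_{|y|≪1} min{1, |ξ|y²}/y² · dy/|ξ|^{1/2} ≲ 1. -/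
open MeasureTheory Complex Set
open scoped ENNReal

noncomputable section

lemma norm_one_sub_exp_sq_le' (θ : ℝ) :
    ‖1 - Complex.exp (Complex.I * (θ : ℂ))‖ ^ 2 ≤ min 4 (θ ^ 2) := by
  have h1 : Complex.exp (Complex.I * (θ : ℂ)) = Complex.exp ((θ : ℂ) * Complex.I) := by
    ring_nf
  have hre : (1 - Complex.exp (Complex.I * (θ : ℂ))).re = 1 - Real.cos θ := by
    rw [h1]; simp [Complex.exp_ofReal_mul_I_re]
  have him : (1 - Complex.exp (Complex.I * (θ : ℂ))).im = - Real.sin θ := by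
    rw [h1]; simp [Complex.exp_ofReal_mul_I_im]
  have hn : ‖1 - Complex.exp (Complex.I * (θ : ℂ))‖ ^ 2 = 2 - 2 * Real.cos θ := by
    rw [Complex.sq_norm, Complex.normSq_apply, hre, him]
    nlinarith [Real.sin_sq_add_cos_sq θ]
  rw [hn]
  have hs : Real.sin (θ/2) ^ 2 = 1/2 - Real.cos θ / 2 := by
    have h := Real.sin_sq_eq_half_sub (θ/2)
    rw [show 2 * (θ/2) = θ by ring] at h
    linarith
  have habs : |Real.sin (θ/2)| ≤ |θ/2| := Real.abs_sin_le_abs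
  have h2 : Real.sin (θ/2)^2 ≤ (θ/2)^2 := by
    nlinarith [abs_nonneg (Real.sin (θ/2)), abs_nonneg (θ/2),
      _root_.sq_abs (Real.sin (θ/2)), _root_.sq_abs (θ/2)]
  refine le_min ?_ ?_
  · nlinarith [Real.neg_one_le_cos θ]
  · nlinarith

lemma resonant_ptwise (K u v x : ℝ) (hK : 1 ≤ K) (hv1 : 1 ≤ v^2) (hvK : K ≤ v^2)
    (hx : u^2 ≤ 1 → x^2 ≤ 9*K) :
    ‖(1 - Complex.exp (Complex.I * ((x * (u*v) : ℝ) : ℂ))) / ((u*v : ℝ) : ℂ)‖^2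
      ≤ 8/(1+u^2) + 18*K/(1+(3*K/2*u)^2) := by
  have hD1 : (0:ℝ) ≤ 8/(1+u^2) := by positivity
  have hD2 : (0:ℝ) ≤ 18*K/(1+(3*K/2*u)^2) := by positivity
  by_cases hu : u = 0
  · simp [hu]
    positivity
  have hvne : v ≠ 0 := by
    intro h; rw [h] at hv1; norm_num at hv1
  have hpne : u * v ≠ 0 := mul_ne_zero hu hvne
  have hp2 : (0:ℝ) < (u*v)^2 := by positivity
  have hnorm : ‖(1 - Complex.exp (Complex.I * ((x * (u*v) : ℝ) : ℂ))) / ((u*v : ℝ) : ℂ)‖^2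
      = ‖1 - Complex.exp (Complex.I * ((x * (u*v) : ℝ) : ℂ))‖^2 / (u*v)^2 := by
    rw [norm_div, div_pow, Complex.norm_real, Real.norm_eq_abs, _root_.sq_abs]
  rw [hnorm]
  set N := ‖1 - Complex.exp (Complex.I * ((x * (u*v) : ℝ) : ℂ))‖^2 with hN
  have hkey := norm_one_sub_exp_sq_le' (x * (u*v))
  have hN4 : N ≤ 4 := le_trans hkey (min_le_left _ _)
  have hNx : N ≤ x^2 * (u*v)^2 := by
    refine le_trans hkey (le_trans (min_le_right _ _) (by rw [mul_pow]))
  have hN0 : 0 ≤ N := sq_nonneg _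
  have hu2 : (0:ℝ) < u^2 := by positivity
  by_cases hcase : 1 ≤ u^2
  · have : N / (u*v)^2 ≤ 8/(1+u^2) := by
      rw [div_le_div_iff₀ hp2 (by positivity)]
      nlinarith [mul_pow u v 2, sq_nonneg (u*v)]
    linarith
  · push_neg at hcase
    have hx9 : x^2 ≤ 9*K := hx hcase.le
    by_cases hc2 : (3*K/2*u)^2 ≤ 1
    · have h1 : N / (u*v)^2 ≤ x^2 := by
        rw [div_le_iff₀ hp2]; linarith
      have h2 : 9*K ≤ 18*K/(1+(3*K/2*u)^2) := by
        rw [le_div_iff₀ (by positivity)]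
        nlinarith
      linarith
    · push_neg at hc2
      have h1 : N / (u*v)^2 ≤ 18*K/(1+(3*K/2*u)^2) := by
        rw [div_le_div_iff₀ hp2 (by positivity)]
        have e1 : (3*K/2*u)^2 = 9*K^2/4 * u^2 := by ring
        rw [mul_pow]
        nlinarith [mul_le_mul_of_nonneg_left hvK (le_of_lt hu2),
          sq_nonneg (K*u), e1 ▸ hc2.le]
      linarith

lemma lorentz_integrable (A c r : ℝ) (hc : c ≠ 0) :
    Integrable (fun t : ℝ => A / (1 + (c*(t - r))^2)) := by
  have hg : Integrable (fun u : ℝ => A * (1+u^2)⁻¹) :=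
    integrable_inv_one_add_sq.const_mul A
  have h1 : Integrable (fun y : ℝ => A * (1+(y - c*r)^2)⁻¹) := hg.comp_sub_right (c*r)
  have h2 : Integrable (fun t : ℝ => A * (1+(c*t - c*r)^2)⁻¹) := h1.comp_mul_left' hc
  refine h2.congr (Filter.Eventually.of_forall fun t => ?_)
  show A * (1 + (c * t - c * r) ^ 2)⁻¹ = A / (1 + (c * (t - r)) ^ 2)
  rw [div_eq_mul_inv]
  ring_nf

lemma lorentz_integral (A c r : ℝ) (hc : 0 < c) :
    ∫ t : ℝ, A / (1 + (c*(t - r))^2) = A * Real.pi / c := by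
  have e1 : ∀ t : ℝ, A / (1 + (c*(t - r))^2)
      = (fun y : ℝ => A * (1+(y - c*r)^2)⁻¹) (c * t) := by
    intro t; rw [div_eq_mul_inv]; ring_nf
  calc ∫ t : ℝ, A / (1 + (c*(t - r))^2)
      = ∫ t : ℝ, (fun y : ℝ => A * (1+(y - c*r)^2)⁻¹) (c * t) := by
        congr 1; ext t; exact e1 t
    _ = |c⁻¹| • ∫ y : ℝ, A * (1+(y - c*r)^2)⁻¹ :=
        MeasureTheory.Measure.integral_comp_mul_left (fun y : ℝ => A * (1+(y - c*r)^2)⁻¹) c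
    _ = |c⁻¹| • ∫ y : ℝ, A * (1+y^2)⁻¹ := by
        rw [integral_sub_right_eq_self (fun y : ℝ => A * (1+y^2)⁻¹) (c*r)]
    _ = A * Real.pi / c := by
        rw [integral_const_mul, integral_univ_inv_one_add_sq, smul_eq_mul,
          abs_of_pos (inv_pos.mpr hc)]
        field_simp

set_option maxHeartbeats 1000000 in
/-- Core resonant kernel estimate: for any thresholds `a` (for `|ξ₂| ≫ 1`, i.e. `|ξ₂| ≥ a`)
and `b > 0` (for `|y| ≪ 1`, i.e. `|y(ξ₂)| ≤ b`), there are `C, M` such that for all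
`|ξ| ≥ M`, `∫ χ · |(1 - e^{iξ₂(2ξ-ξ₂+ξ₂²)})/(2ξ-ξ₂+ξ₂²)|² dξ₂ ≤ C`,
where `y(ξ₂) = 2ξ - ξ₂ + ξ₂²`. -/
theorem resonant_kernel_l2_bound (a b : ℝ) (hb : 0 < b) :
    ∃ C M : ℝ, 0 < C ∧ 0 < M ∧ ∀ ξ : ℝ, M ≤ |ξ| →
      (∫ ξ₂ : ℝ,
        (if a ≤ |ξ₂| ∧ |2 * ξ - ξ₂ + ξ₂ ^ 2| ≤ b then
          ‖(1 - Complex.exp (Complex.I * ((ξ₂ * (2 * ξ - ξ₂ + ξ₂ ^ 2) : ℝ) : ℂ))) /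
              ((2 * ξ - ξ₂ + ξ₂ ^ 2 : ℝ) : ℂ)‖ ^ 2
        else 0)) ≤ C := by
  refine ⟨161, b + 10, by norm_num, by linarith, fun ξ hξ => ?_⟩
  rcases le_abs.mp hξ with hpos | hneg
  · -- ξ ≥ b + 10 : the cutoff set is empty
    have hzero : ∀ t : ℝ,
        (if a ≤ |t| ∧ |2 * ξ - t + t ^ 2| ≤ b then
          ‖(1 - Complex.exp (Complex.I * ((t * (2 * ξ - t + t ^ 2) : ℝ) : ℂ))) /
              ((2 * ξ - t + t ^ 2 : ℝ) : ℂ)‖ ^ 2 else 0) = 0 := by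
      intro t
      rw [if_neg]
      rintro ⟨-, h2⟩
      have hlb : 2 * ξ - t + t ^ 2 ≥ 2 * (b + 10) - 1/4 := by nlinarith [sq_nonneg (t - 1/2)]
      have := le_abs_self (2 * ξ - t + t ^ 2)
      linarith
    simp only [hzero, integral_zero]
    norm_num
  · -- ξ ≤ -(b+10)
    obtain ⟨K, hKdef⟩ : ∃ K : ℝ, K = -ξ := ⟨-ξ, rfl⟩
    have hKb : b + 10 ≤ K := by rw [hKdef]; linarith
    have hK1 : (1:ℝ) ≤ K := by linarith
    have hc : (0:ℝ) < 3*K/2 := by linarith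
    have hcne : (3*K/2 : ℝ) ≠ 0 := ne_of_gt hc
    obtain ⟨s, hs2, hs0⟩ : ∃ s : ℝ, s^2 = K ∧ 0 ≤ s :=
      ⟨Real.sqrt K, Real.sq_sqrt (by linarith), Real.sqrt_nonneg _⟩
    have hs1 : 1 ≤ s := by nlinarith
    obtain ⟨R, hR2, hR0⟩ : ∃ R : ℝ, R^2 = 1 + 8*K ∧ 0 ≤ R :=
      ⟨Real.sqrt (1 + 8*K), Real.sq_sqrt (by linarith), Real.sqrt_nonneg _⟩
    have hA : 2*s + 1 ≤ R := by nlinarith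
    have hB : R ≤ 6*s - 3 := by nlinarith
    obtain ⟨rp, hrpdef⟩ : ∃ rp : ℝ, rp = (1+R)/2 := ⟨_, rfl⟩
    obtain ⟨rm, hrmdef⟩ : ∃ rm : ℝ, rm = (1-R)/2 := ⟨_, rfl⟩
    have hfact : ∀ t : ℝ, 2 * ξ - t + t ^ 2 = (t - rp) * (t - rm) := by
      intro t
      have h1 : (t - rp) * (t - rm) = t^2 - t + (1 - R^2)/4 := by rw [hrpdef, hrmdef]; ring
      rw [h1, hR2]
      have : K = -ξ := hKdef
      linarith
    -- integrability of the dominating function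
    have i1 := lorentz_integrable 8 1 rp one_ne_zero
    have i2 := lorentz_integrable (18*K) (3*K/2) rp hcne
    have i3 := lorentz_integrable 8 1 rm one_ne_zero
    have i4 := lorentz_integrable (18*K) (3*K/2) rm hcne
    have hInt : Integrable (fun t : ℝ =>
        8/(1+(1*(t - rp))^2) + 18*K/(1+(3*K/2*(t - rp))^2) +
        (8/(1+(1*(t - rm))^2) + 18*K/(1+(3*K/2*(t - rm))^2))) := (i1.add i2).add (i3.add i4)
    have hmono : (∫ ξ₂ : ℝ,
        (if a ≤ |ξ₂| ∧ |2 * ξ - ξ₂ + ξ₂ ^ 2| ≤ b then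
          ‖(1 - Complex.exp (Complex.I * ((ξ₂ * (2 * ξ - ξ₂ + ξ₂ ^ 2) : ℝ) : ℂ))) /
              ((2 * ξ - ξ₂ + ξ₂ ^ 2 : ℝ) : ℂ)‖ ^ 2
        else 0)) ≤ ∫ t : ℝ,
        (8/(1+(1*(t - rp))^2) + 18*K/(1+(3*K/2*(t - rp))^2) +
        (8/(1+(1*(t - rm))^2) + 18*K/(1+(3*K/2*(t - rm))^2))) := by
      refine integral_mono_of_nonneg (Filter.Eventually.of_forall fun t => ?_) hInt
        (Filter.Eventually.of_forall fun t => ?_)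
      · dsimp only [Pi.zero_apply]
        split_ifs
        · positivity
        · exact le_refl 0
      · dsimp only
        simp only [one_mul]
        split_ifs with hcond
        · rw [hfact t]
          rcases le_or_gt 0 t with ht | ht
          · -- t ≥ 0 : use u = t - rp, v = t - rm
            have hvlb : s ≤ t - rm := by rw [hrmdef]; linarith
            have hx1 : (t - rp)^2 ≤ 1 → t^2 ≤ 9*K := by
              intro hu
              have h1 : t - rp ≤ 1 := by nlinarith
              have h2 : t ≤ 3*s := by rw [hrpdef] at h1; linarith
              nlinarith
            have hbnd := resonant_ptwise K (t - rp) (t - rm) t hK1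
              (by nlinarith) (by nlinarith) hx1
            have hrest : (0:ℝ) ≤ 8/(1+(t - rm)^2) + 18*K/(1+(3*K/2*(t - rm))^2) := by
              positivity
            linarith
          · -- t < 0 : use u = t - rm, v = t - rp
            rw [mul_comm (t - rp) (t - rm)]
            have hvlb : s + 1 ≤ rp - t := by rw [hrpdef]; linarith
            have hx1 : (t - rm)^2 ≤ 1 → t^2 ≤ 9*K := by
              intro hu
              have h1 : rm - t ≤ 1 := by nlinarith
              have h2 : -t ≤ 3*s := by rw [hrmdef] at h1; linarith
              nlinarith
            have hbnd := resonant_ptwise K (t - rm) (t - rp) t hK1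
              (by nlinarith) (by nlinarith) hx1
            have hrest : (0:ℝ) ≤ 8/(1+(t - rp)^2) + 18*K/(1+(3*K/2*(t - rp))^2) := by
              positivity
            linarith
        · positivity
    have hval : (∫ t : ℝ,
        (8/(1+(1*(t - rp))^2) + 18*K/(1+(3*K/2*(t - rp))^2) +
        (8/(1+(1*(t - rm))^2) + 18*K/(1+(3*K/2*(t - rm))^2)))) = 40 * Real.pi := by
      have i12 : Integrable (fun t : ℝ => 8/(1+(1*(t - rp))^2) + 18*K/(1+(3*K/2*(t - rp))^2)) := i1.add i2
      have i34 : Integrable (fun t : ℝ => 8/(1+(1*(t - rm))^2) + 18*K/(1+(3*K/2*(t - rm))^2)) := i3.add i4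
      rw [integral_add i12 i34, integral_add i1 i2, integral_add i3 i4,
        lorentz_integral 8 1 rp one_pos, lorentz_integral (18*K) (3*K/2) rp hc,
        lorentz_integral 8 1 rm one_pos, lorentz_integral (18*K) (3*K/2) rm hc]
      have hKne : K ≠ 0 := by linarith
      field_simp
      ring
    rw [hval] at hmono
    have : 40 * Real.pi ≤ 161 := by nlinarith [Real.pi_le_four]
    linarith
end
end

section
/- For each fixed ξ₁ with |ξ₁| ≫ 1, ‖χ_{1 ≪ |ξ|² ∼ |ξ₁|} min{1, |ξ₁|^{1/2}|ξ - 2ξ₁ - ξ²|} / |ξ - 2ξ₁ - ξ²|‖²_{L²_ξ} ≲ 1, with constant independent of ξ₁. The proof substitutes y(ξ) = ξ - 2ξ₁ - ξ², for which |dy| ∼ |ξ₁|^{1/2}|dξ| on the region 1 ≪ |ξ|² ∼ |ξ₁|, and evaluates ∫ min{1, |ξ₁| y²}/y² · dy/|ξ₁|^{1/2} ≲ 1. -/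
open MeasureTheory Set

noncomputable section

lemma cauchy_integrable (b r : ℝ) (hb : 0 < b) :
    Integrable (fun x : ℝ => (1 + b * (x - r) ^ 2)⁻¹) := by
  have hs : Real.sqrt b ≠ 0 := ne_of_gt (Real.sqrt_pos.2 hb)
  have h := (integrable_inv_one_add_sq.comp_mul_left' hs).comp_sub_right r
  convert h using 2 with x
  rw [mul_pow, Real.sq_sqrt hb.le]

lemma cauchy_integral (b r : ℝ) (hb : 0 < b) :
    ∫ x : ℝ, (1 + b * (x - r) ^ 2)⁻¹ = Real.pi / Real.sqrt b := by
  have hs : 0 < Real.sqrt b := Real.sqrt_pos.2 hb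
  have h1 : (fun x : ℝ => (1 + b * (x - r) ^ 2)⁻¹)
      = fun x : ℝ => (fun y : ℝ => (1 + (Real.sqrt b * y) ^ 2)⁻¹) (x - r) := by
    funext x; simp only [mul_pow, Real.sq_sqrt hb.le]
  rw [h1, integral_sub_right_eq_self (fun y : ℝ => (1 + (Real.sqrt b * y) ^ 2)⁻¹) r]
  rw [MeasureTheory.Measure.integral_comp_mul_left (fun y : ℝ => (1 + y ^ 2)⁻¹) (Real.sqrt b)]
  rw [integral_univ_inv_one_add_sq]
  rw [abs_of_pos (inv_pos.2 hs), smul_eq_mul, inv_mul_eq_div]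

lemma bump_bound (a y d : ℝ) (ha : 1 ≤ a) (hy : 2 * a ^ 2 * d ^ 2 ≤ y ^ 2) (hy0 : y ≠ 0) :
    (min 1 (a * |y|) / |y|) ^ 2 ≤ 2 * a ^ 2 * (1 + 2 * a ^ 4 * d ^ 2)⁻¹ := by
  have ha0 : (0:ℝ) < a := lt_of_lt_of_le one_pos ha
  have hya : (0:ℝ) < |y| := abs_pos.2 hy0
  have hy2 : (0:ℝ) < y ^ 2 := by positivity
  have hden : (0:ℝ) < 1 + 2 * a ^ 4 * d ^ 2 := by positivity
  have hL : (min 1 (a * |y|) / |y|) ^ 2 ≤ min (a ^ 2) (1 / y ^ 2) := by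
    have hysq : |y| ^ 2 = y ^ 2 := sq_abs y
    rcases le_total (a * |y|) 1 with h | h
    · rw [min_eq_right h]
      have heq : (a * |y| / |y|) ^ 2 = a ^ 2 := by
        rw [mul_div_assoc, div_self (ne_of_gt hya), mul_one]
      rw [heq]
      refine le_min le_rfl ?_
      rw [le_div_iff₀ hy2]
      nlinarith [mul_le_mul h h (by positivity : (0:ℝ) ≤ a * |y|) zero_le_one]
    · rw [min_eq_left h]
      have heq : (1 / |y| : ℝ) ^ 2 = 1 / y ^ 2 := by
        rw [div_pow, one_pow, hysq]
      rw [heq]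
      refine le_min ?_ le_rfl
      rw [div_le_iff₀ hy2]
      nlinarith [mul_le_mul h h zero_le_one (by positivity : (0:ℝ) ≤ a * |y|)]
  refine hL.trans ?_
  rw [← div_eq_mul_inv]
  rcases le_total (2 * a ^ 4 * d ^ 2) 1 with h | h
  · refine (min_le_left _ _).trans ?_
    rw [le_div_iff₀ hden]
    nlinarith
  · refine (min_le_right _ _).trans ?_
    rw [div_le_div_iff₀ hy2 hden]
    nlinarith [mul_le_mul_of_nonneg_left hy (by positivity : (0:ℝ) ≤ 2 * a ^ 2)]

set_option maxHeartbeats 1000000 in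
/-- Resonant-region kernel bound -/
theorem resonant_kernel_bound (K : ℝ) (hK : 1 ≤ K) :
    ∃ C M : ℝ, 0 < C ∧ 0 < M ∧ ∀ ξ₁ : ℝ, M ≤ |ξ₁| →
      (∫ ξ : ℝ,
        (if M ≤ ξ ^ 2 ∧ |ξ₁| ≤ K * ξ ^ 2 ∧ ξ ^ 2 ≤ K * |ξ₁| then
          (min 1 (|ξ₁| ^ ((1:ℝ)/2) * |ξ - 2 * ξ₁ - ξ ^ 2|) / |ξ - 2 * ξ₁ - ξ ^ 2|) ^ 2
        else 0)) ≤ C := by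
  have hπ : (0:ℝ) < Real.pi := Real.pi_pos
  have hK0 : (0:ℝ) < K := lt_of_lt_of_le one_pos hK
  refine ⟨4 * Real.pi + 2 * Real.sqrt K, 1, by positivity, one_pos, ?_⟩
  intro ξ₁ hξ₁
  set f : ℝ → ℝ := fun ξ =>
    (if (1:ℝ) ≤ ξ ^ 2 ∧ |ξ₁| ≤ K * ξ ^ 2 ∧ ξ ^ 2 ≤ K * |ξ₁| then
      (min 1 (|ξ₁| ^ ((1:ℝ)/2) * |ξ - 2 * ξ₁ - ξ ^ 2|) / |ξ - 2 * ξ₁ - ξ ^ 2|) ^ 2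
    else 0) with hf
  have hfnonneg : ∀ ξ, 0 ≤ f ξ := by
    intro ξ; rw [hf]; dsimp only; split
    · exact sq_nonneg _
    · exact le_rfl
  rcases lt_or_ge ξ₁ 0 with hneg | hpos
  · -- negative case
    have habs : |ξ₁| = -ξ₁ := abs_of_neg hneg
    have hξ₁' : (1:ℝ) ≤ -ξ₁ := by rw [habs] at hξ₁; exact hξ₁
    set a : ℝ := Real.sqrt (-ξ₁) with ha
    have ha2 : a ^ 2 = -ξ₁ := Real.sq_sqrt (by linarith)
    have ha1 : (1:ℝ) ≤ a := by nlinarith [Real.sqrt_nonneg (-ξ₁)]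
    have ha0 : (0:ℝ) < a := lt_of_lt_of_le one_pos ha1
    have hrpow : |ξ₁| ^ ((1:ℝ)/2) = a := by
      rw [habs, ha, Real.sqrt_eq_rpow]
    set D : ℝ := Real.sqrt (1 - 8 * ξ₁) with hD
    have hD2 : D ^ 2 = 1 - 8 * ξ₁ := Real.sq_sqrt (by linarith)
    set rp : ℝ := (1 + D) / 2 with hrp
    set rm : ℝ := (1 - D) / 2 with hrm
    have hb : (0:ℝ) < 2 * a ^ 4 := by positivity
    set g : ℝ → ℝ := fun x =>
      2 * a ^ 2 * (1 + 2 * a ^ 4 * (x - rp) ^ 2)⁻¹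
        + 2 * a ^ 2 * (1 + 2 * a ^ 4 * (x - rm) ^ 2)⁻¹ with hg
    have hint1 : Integrable (fun x : ℝ => (1 + 2 * a ^ 4 * (x - rp) ^ 2)⁻¹) :=
      cauchy_integrable _ rp hb
    have hint2 : Integrable (fun x : ℝ => (1 + 2 * a ^ 4 * (x - rm) ^ 2)⁻¹) :=
      cauchy_integrable _ rm hb
    have hgint : Integrable g := by
      rw [hg]; exact (hint1.const_mul _).add (hint2.const_mul _)
    have hle : ∀ ξ, f ξ ≤ g ξ := by
      intro ξ
      have hgnn : 0 ≤ g ξ := by rw [hg]; positivity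
      rw [hf]; dsimp only
      split
      case isFalse => exact hgnn
      case isTrue hcond =>
        rw [hrpow]
        set y : ℝ := ξ - 2 * ξ₁ - ξ ^ 2 with hy
        set u : ℝ := ξ - rp with hu
        set v : ℝ := ξ - rm with hv
        have hvu : v - u = D := by rw [hv, hu, hrp, hrm]; ring
        have hyuv : y = -(u * v) := by
          rw [hy, hu, hv, hrp, hrm]; linear_combination (-1/4 : ℝ) * hD2
        have hysq : y ^ 2 = u ^ 2 * v ^ 2 := by rw [hyuv]; ring
        by_cases hy0 : y = 0
        · rw [hy0]; simpa using hgnn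
        · rcases le_total (u ^ 2) (v ^ 2) with hm | hm
          · have hv2 : 2 * a ^ 2 ≤ v ^ 2 := by nlinarith [sq_nonneg (u + v), hD2, ha2]
            have hyge : 2 * a ^ 2 * u ^ 2 ≤ y ^ 2 := by
              rw [hysq]; nlinarith [sq_nonneg u]
            have := bump_bound a y u ha1 hyge hy0
            rw [hg]
            exact this.trans (le_add_of_nonneg_right (by positivity))
          · have hu2 : 2 * a ^ 2 ≤ u ^ 2 := by nlinarith [sq_nonneg (u + v), hD2, ha2]
            have hyge : 2 * a ^ 2 * v ^ 2 ≤ y ^ 2 := by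
              rw [hysq]; nlinarith [sq_nonneg v]
            have := bump_bound a y v ha1 hyge hy0
            rw [hg]
            exact this.trans (le_add_of_nonneg_left (by positivity))
    have hsqrt2 : Real.sqrt 2 * a ^ 2 = Real.sqrt (2 * a ^ 4) := by
      rw [Real.sqrt_mul (by norm_num : (0:ℝ) ≤ 2), show a ^ 4 = (a ^ 2) ^ 2 by ring,
        Real.sqrt_sq (by positivity)]
    have h2le : (1:ℝ) ≤ Real.sqrt 2 := by
      nlinarith [Real.sq_sqrt (show (0:ℝ) ≤ 2 by norm_num), Real.sqrt_nonneg 2]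
    have h2le' : Real.sqrt 2 ≤ 2 := by
      nlinarith [Real.sq_sqrt (show (0:ℝ) ≤ 2 by norm_num), Real.sqrt_nonneg 2]
    calc ∫ ξ, f ξ ≤ ∫ ξ, g ξ :=
          integral_mono_of_nonneg (Filter.Eventually.of_forall hfnonneg) hgint
            (Filter.Eventually.of_forall hle)
      _ = 2 * a ^ 2 * (Real.pi / Real.sqrt (2 * a ^ 4))
            + 2 * a ^ 2 * (Real.pi / Real.sqrt (2 * a ^ 4)) := by
          rw [hg, integral_add (hint1.const_mul _) (hint2.const_mul _),
            integral_const_mul, integral_const_mul,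
            cauchy_integral _ rp hb, cauchy_integral _ rm hb]
      _ ≤ 4 * Real.pi + 2 * Real.sqrt K := by
          rw [← hsqrt2]
          have key : 2 * a ^ 2 * (Real.pi / (Real.sqrt 2 * a ^ 2)) = 2 * Real.pi / Real.sqrt 2 := by
            field_simp
          rw [key]
          have : 2 * Real.pi / Real.sqrt 2 ≤ 2 * Real.pi := by
            apply div_le_self (by positivity) h2le
          nlinarith [Real.sqrt_nonneg K]
  · -- positive case
    have habs : |ξ₁| = ξ₁ := abs_of_nonneg hpos
    have hξ₁' : (1:ℝ) ≤ ξ₁ := by rw [habs] at hξ₁; exact hξ₁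
    have hξ₁0 : (0:ℝ) < ξ₁ := lt_of_lt_of_le one_pos hξ₁'
    set R : ℝ := Real.sqrt (K * ξ₁) with hR
    set g : ℝ → ℝ := (Icc (-R) R).indicator (fun _ => (ξ₁ ^ 2)⁻¹) with hg
    have hgint : Integrable g := by
      rw [hg, integrable_indicator_iff measurableSet_Icc]
      exact integrableOn_const measure_Icc_lt_top.ne
    have hle : ∀ ξ, f ξ ≤ g ξ := by
      intro ξ
      have hgnn : 0 ≤ g ξ := indicator_nonneg (fun _ _ => by positivity) ξ
      rw [hf]; dsimp only
      split
      case isFalse => exact hgnn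
      case isTrue hcond =>
        obtain ⟨h1, h2, h3⟩ := hcond
        have hmem : ξ ∈ Icc (-R) R := by
          have : |ξ| ≤ R := by
            rw [hR, ← Real.sqrt_sq_eq_abs]
            exact Real.sqrt_le_sqrt (by rw [habs] at h3; linarith)
          exact abs_le.1 this
        rw [hg, indicator_of_mem hmem]
        set y : ℝ := ξ - 2 * ξ₁ - ξ ^ 2 with hy
        have hyge : ξ₁ ≤ |y| := by
          have hle' : y ≤ -ξ₁ := by rw [hy]; nlinarith [sq_nonneg (ξ - 1/2)]
          calc ξ₁ ≤ -y := by linarith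
            _ ≤ |y| := neg_le_abs y
        have hq : min 1 (|ξ₁| ^ ((1:ℝ)/2) * |y|) / |y| ≤ 1 / ξ₁ :=
          div_le_div₀ zero_le_one (min_le_left _ _) hξ₁0 hyge
        have hqnn : 0 ≤ min 1 (|ξ₁| ^ ((1:ℝ)/2) * |y|) / |y| := by
          apply div_nonneg _ (abs_nonneg y)
          exact le_min zero_le_one (by positivity)
        calc (min 1 (|ξ₁| ^ ((1:ℝ)/2) * |y|) / |y|) ^ 2 ≤ (1 / ξ₁) ^ 2 :=
              pow_le_pow_left₀ hqnn hq 2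
          _ = (ξ₁ ^ 2)⁻¹ := by rw [div_pow, one_pow, one_div]
    have hvol : (volume (Icc (-R) R)).toReal = 2 * R := by
      rw [Real.volume_Icc, ENNReal.toReal_ofReal (by rw [sub_neg_eq_add]; positivity)]
      ring
    have hRle : R ≤ Real.sqrt K * ξ₁ := by
      rw [hR, Real.sqrt_mul hK0.le]
      have : Real.sqrt ξ₁ ≤ ξ₁ := by
        nlinarith [Real.sq_sqrt hξ₁0.le, Real.sqrt_nonneg ξ₁]
      nlinarith [Real.sqrt_nonneg K, Real.one_le_sqrt.2 hK]
    calc ∫ ξ, f ξ ≤ ∫ ξ, g ξ :=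
          integral_mono_of_nonneg (Filter.Eventually.of_forall hfnonneg) hgint
            (Filter.Eventually.of_forall hle)
      _ = (volume (Icc (-R) R)).toReal • (ξ₁ ^ 2)⁻¹ := by
          rw [hg]; exact integral_indicator_const _ measurableSet_Icc
      _ = 2 * R * (ξ₁ ^ 2)⁻¹ := by rw [hvol, smul_eq_mul]
      _ ≤ 2 * Real.sqrt K := by
          rw [mul_inv_le_iff₀ (by positivity : (0:ℝ) < ξ₁ ^ 2)]
          have h1 : ξ₁ ≤ ξ₁ ^ 2 := by nlinarith
          nlinarith [mul_le_mul_of_nonneg_left h1 (Real.sqrt_nonneg K), hRle]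
      _ ≤ 4 * Real.pi + 2 * Real.sqrt K := by nlinarith
end
end
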